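/- arXiv:1911.08686 — 9 statements merged into one kernel-verified Lean document; each statement's English description precedes it below -/
import Mathlib

section
/- Every tree T of order n ≥ 2 contains an independent set I of size at least n/4 such that every vertex of I has degree at most 2 in T. -/
open SimpleGraph Finset

/-- In a tree, adjacent vertices have different distances to any root. -/
lemma tree_adj_dist_ne {V : Type*} {G : SimpleGraph V} (hT : G.IsTree) (r u v : V)
    (huv : G.Adj u v) : G.dist r u ≠ G.dist r v := by
  classical
  intro h
  obtain ⟨p, hp, hplen⟩ := hT.isConnected.exists_path_of_dist r u
  obtain ⟨q, hq, hqlen⟩ := hT.isConnected.exists_path_of_dist r v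
  have hvns : v ∉ p.support := by
    intro hv
    have hspec := p.take_spec hv
    have hlen : (p.takeUntil v hv).length + (p.dropUntil v hv).length = p.length := by
      conv_rhs => rw [← hspec]
      rw [SimpleGraph.Walk.length_append]
    have hdpos : 0 < (p.dropUntil v hv).length := by
      rcases Nat.eq_zero_or_pos (p.dropUntil v hv).length with h0 | h0
      · exact absurd (SimpleGraph.Walk.eq_of_length_eq_zero h0) huv.ne'
      · exact h0
    have hle : G.dist r v ≤ (p.takeUntil v hv).length := SimpleGraph.dist_le _
    omega
  have hpath : (p.concat huv).IsPath := by
    rw [SimpleGraph.Walk.isPath_def, SimpleGraph.Walk.support_concat,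
      List.nodup_append]
    refine ⟨hp.support_nodup, List.nodup_singleton _, ?_⟩
    intro a ha b hb
    rw [List.mem_singleton] at hb
    subst hb
    exact fun hab => hvns (hab ▸ ha)
  have := (hT.existsUnique_path r v).unique hpath hq
  have hlen : (p.concat huv).length = q.length := by rw [this]
  rw [SimpleGraph.Walk.length_concat] at hlen
  omega

/-- Every tree T of order n ≥ 2 contains an independent set I of size
at least n/4 such that every vertex of I has degree at most 2 in T. -/
theorem stmt_1 {V : Type*} [Fintype V] (G : SimpleGraph V) [DecidableRel G.Adj]
    (hT : G.IsTree) (hn : 2 ≤ Fintype.card V) :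
    ∃ I : Finset V,
      (∀ x ∈ I, ∀ y ∈ I, x ≠ y → ¬ G.Adj x y) ∧
      (∀ x ∈ I, G.degree x ≤ 2) ∧
      ((I.card : ℝ) ≥ (Fintype.card V : ℝ) / 4) := by
  classical
  have hne : Nonempty V := Fintype.card_pos_iff.mp (by omega)
  obtain ⟨r⟩ := hne
  set n := Fintype.card V with hn_def
  -- every vertex has positive degree
  have hmin : ∀ v : V, 1 ≤ G.degree v := by
    intro v
    obtain ⟨w, hw⟩ := Fintype.exists_ne_of_one_lt_card (by omega) v
    obtain ⟨p⟩ := hT.isConnected v w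
    rw [show (1 : ℕ) = 0 + 1 from rfl, Nat.add_one_le_iff, G.degree_pos_iff_exists_adj]
    cases p with
    | nil => exact absurd rfl hw.symm
    | cons h _ => exact ⟨_, h⟩
  -- sum of degrees
  have hsum : ∑ v, G.degree v = 2 * (n - 1) := by
    rw [SimpleGraph.sum_degrees_eq_twice_card_edges]
    have := hT.card_edgeFinset
    omega
  set S : Finset V := Finset.univ.filter (fun v => G.degree v ≤ 2) with hS
  -- |S| is at least (n+2)/2
  have hScard : n + 2 ≤ 2 * S.card := by
    have hsplit : ∑ v ∈ S, G.degree v + ∑ v ∈ Sᶜ, G.degree v = 2 * (n - 1) := by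
      rw [Finset.sum_add_sum_compl, hsum]
    have h1 : S.card ≤ ∑ v ∈ S, G.degree v := by
      calc S.card = ∑ _v ∈ S, 1 := by simp
        _ ≤ ∑ v ∈ S, G.degree v := Finset.sum_le_sum fun v _ => hmin v
    have h2 : 3 * Sᶜ.card ≤ ∑ v ∈ Sᶜ, G.degree v := by
      calc 3 * Sᶜ.card = ∑ _v ∈ Sᶜ, 3 := by rw [Finset.sum_const]; ring
        _ ≤ ∑ v ∈ Sᶜ, G.degree v := by
            refine Finset.sum_le_sum fun v hv => ?_
            simp only [hS, Finset.mem_compl, Finset.mem_filter, Finset.mem_univ,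
              true_and, not_le] at hv
            omega
    have h3 : S.card + Sᶜ.card = n := by
      rw [Finset.card_add_card_compl]
    omega
  -- split S by parity of distance to r
  set I0 : Finset V := S.filter (fun v => G.dist r v % 2 = 0) with hI0
  set I1 : Finset V := S.filter (fun v => ¬ G.dist r v % 2 = 0) with hI1
  have hsplit2 : I0.card + I1.card = S.card := Finset.card_filter_add_card_filter_not _
  -- independence of each class
  have hind : ∀ I : Finset V, (I = I0 ∨ I = I1) →
      ∀ x ∈ I, ∀ y ∈ I, x ≠ y → ¬ G.Adj x y := by
    rintro I (rfl | rfl) x hx y hy _ hadj <;>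
    [rw [hI0, Finset.mem_filter] at hx hy; rw [hI1, Finset.mem_filter] at hx hy] <;>
    · have hne := tree_adj_dist_ne hT r x y hadj
      have hxy : G.dist x y = 1 := SimpleGraph.dist_eq_one_iff_adj.mpr hadj
      have hyx : G.dist y x = 1 := SimpleGraph.dist_eq_one_iff_adj.mpr hadj.symm
      have h1 : G.dist r x ≤ G.dist r y + G.dist y x := hT.isConnected.dist_triangle
      have h2 : G.dist r y ≤ G.dist r x + G.dist x y := hT.isConnected.dist_triangle
      omega
  have hdeg : ∀ I : Finset V, (I = I0 ∨ I = I1) → ∀ x ∈ I, G.degree x ≤ 2 := by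
    rintro I (rfl | rfl) x hx <;>
    · rw [Finset.mem_filter] at hx
      have := hx.1
      rw [hS, Finset.mem_filter] at this
      exact this.2
  -- take the larger class
  rcases le_total I0.card I1.card with hle | hle
  · refine ⟨I1, hind I1 (Or.inr rfl), hdeg I1 (Or.inr rfl), ?_⟩
    have h4 : n ≤ 4 * I1.card := by omega
    rw [ge_iff_le, div_le_iff₀ (by norm_num)]
    calc (n : ℝ) ≤ (4 * I1.card : ℕ) := by exact_mod_cast h4
      _ = I1.card * 4 := by push_cast; ring
  · refine ⟨I0, hind I0 (Or.inl rfl), hdeg I0 (Or.inl rfl), ?_⟩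
    have h4 : n ≤ 4 * I0.card := by omega
    rw [ge_iff_le, div_le_iff₀ (by norm_num)]
    calc (n : ℝ) ≤ (4 * I0.card : ℕ) := by exact_mod_cast h4
      _ = I0.card * 4 := by push_cast; ring
end

section
/- Every biconnected (2-connected) graph of order at least 4 containing no chorded cycle is triangle-free. -/
/-- A chord of the closed walk `c`: an edge of `G` between two vertices of `c`
that is not an edge of `c`. -/
def HasChord {V : Type*} (G : SimpleGraph V) {u : V} (c : G.Walk u u) : Prop :=
  ∃ a b : V, a ∈ c.support ∧ b ∈ c.support ∧ G.Adj a b ∧ s(a, b) ∉ c.edges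

/-- `G` contains no chorded cycle. -/
def NoChordedCycle {V : Type*} (G : SimpleGraph V) : Prop :=
  ∀ (u : V) (c : G.Walk u u), c.IsCycle → ¬ HasChord G c

/-- `G` is 2-connected (biconnected): it has at least 3 vertices and deleting any
single vertex leaves a connected graph. -/
def TwoConnected {V : Type*} (G : SimpleGraph V) : Prop :=
  3 ≤ Nat.card V ∧ ∀ v : V, (G.induce {u : V | u ≠ v}).Connected

namespace ChordAux

open SimpleGraph Walk

variable {V : Type*} {G : SimpleGraph V}

/-- There is a walk from `a` to `b` avoiding the vertex `z` and the edge `e`. -/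
def Av (G : SimpleGraph V) (z : V) (e : Sym2 V) (a b : V) : Prop :=
  ∃ W : G.Walk a b, z ∉ W.support ∧ e ∉ W.edges

lemma Av.symm {z : V} {e : Sym2 V} {a b : V} (h : Av G z e a b) : Av G z e b a := by
  obtain ⟨W, h1, h2⟩ := h
  exact ⟨W.reverse, by simpa using h1, by simpa using h2⟩

lemma Av.trans {z : V} {e : Sym2 V} {a b c : V}
    (h : Av G z e a b) (h' : Av G z e b c) : Av G z e a c := by
  obtain ⟨W, h1, h2⟩ := h
  obtain ⟨W', h1', h2'⟩ := h'
  refine ⟨W.append W', ?_, ?_⟩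
  · rw [Walk.support_append, List.mem_append]
    rintro (h | h)
    · exact h1 h
    · exact h1' (List.mem_of_mem_tail h)
  · rw [Walk.edges_append, List.mem_append]
    rintro (h | h)
    · exact h2 h
    · exact h2' h

/-- Every vertex joined by a `z`-avoiding walk to `x` is, after possibly removing the
edge `s(x,y)`, still joined to `x` or to `y`. -/
lemma dichotomy {x y z : V} :
    ∀ {u v : V} (Q : G.Walk u v), z ∉ Q.support →
      Av G z s(x, y) u v ∨ Av G z s(x, y) u x ∨ Av G z s(x, y) u y := by
  intro u v Q
  induction Q with
  | nil =>
    intro h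
    left
    exact ⟨Walk.nil, by simpa using h, by simp⟩
  | @cons u b c hadj p ih =>
    intro hz
    rw [Walk.support_cons, List.mem_cons] at hz
    push_neg at hz
    obtain ⟨hzu, hzp⟩ := hz
    by_cases he : s(u, b) = s(x, y)
    · rw [Sym2.eq_iff] at he
      rcases he with ⟨rfl, rfl⟩ | ⟨rfl, rfl⟩
      · right; left; exact ⟨Walk.nil, by simpa using hzu, by simp⟩
      · right; right; exact ⟨Walk.nil, by simpa using hzu, by simp⟩
    · have ext : ∀ {d : V}, Av G z s(x, y) b d → Av G z s(x, y) u d := by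
        rintro d ⟨W, h1, h2⟩
        refine ⟨Walk.cons hadj W, ?_, ?_⟩
        · rw [Walk.support_cons, List.mem_cons]
          rintro (h | h)
          · exact hzu h
          · exact h1 h
        · rw [Walk.edges_cons, List.mem_cons]
          rintro (h | h)
          · exact he h.symm
          · exact h2 h
      rcases ih hzp with h | h | h
      · exact Or.inl (ext h)
      · exact Or.inr (Or.inl (ext h))
      · exact Or.inr (Or.inr (ext h))

/-- Connectivity of `G - v` gives walks avoiding `v`. -/
lemma conn_avoid {v : V} (hc : (G.induce {u : V | u ≠ v}).Connected) {a b : V}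
    (ha : a ≠ v) (hb : b ≠ v) : ∃ W : G.Walk a b, v ∉ W.support := by
  obtain ⟨W⟩ := hc (⟨a, ha⟩ : {u : V | u ≠ v}) ⟨b, hb⟩
  refine ⟨W.map (SimpleGraph.Embedding.induce {u : V | u ≠ v}).toHom, ?_⟩
  intro hv
  have hv' : v ∈ (W.map (SimpleGraph.Embedding.induce {u : V | u ≠ v}).toHom).support := hv
  rw [Walk.support_map, List.mem_map] at hv'
  obtain ⟨⟨c, hc'⟩, -, h⟩ := hv'
  exact hc' h

/-- Core construction: a path between two vertices of a triangle avoiding the third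
vertex and the direct edge yields a chorded cycle. -/
lemma core (hnc : NoChordedCycle G) {x y z : V}
    (hxy : G.Adj x y) (hyz : G.Adj y z) (hzx : G.Adj z x)
    (P : G.Walk x y) (hP : P.IsPath) (hz : z ∉ P.support) (he : s(x, y) ∉ P.edges) :
    False := by
  have hxney : x ≠ y := hxy.ne
  have hynez : y ≠ z := hyz.ne
  have hznex : z ≠ x := hzx.ne
  have hyzP : s(y, z) ∉ P.edges := fun h => hz (Walk.snd_mem_support_of_mem_edges P h)
  have hzxP : s(z, x) ∉ P.edges := fun h => hz (Walk.fst_mem_support_of_mem_edges P h)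
  set c : G.Walk x x := P.append (Walk.cons hyz (Walk.cons hzx Walk.nil)) with hc
  have hedg : c.edges = P.edges ++ [s(y, z), s(z, x)] := by
    rw [hc, Walk.edges_append]
    simp
  have htail : c.support.tail = P.support.tail ++ [z, x] := by
    rw [hc, Walk.tail_support_append]
    simp
  have hxtail : x ∉ P.support.tail := by
    have := hP.support_nodup
    rw [P.support_eq_cons] at this
    exact (List.nodup_cons.mp this).1
  have hztail : z ∉ P.support.tail := fun h => hz (List.mem_of_mem_tail h)
  apply hnc x c
  · rw [Walk.isCycle_def]
    refine ⟨?_, ?_, ?_⟩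
    · rw [Walk.isTrail_def, hedg]
      rw [List.nodup_append]
      refine ⟨hP.isTrail.edges_nodup, ?_, ?_⟩
      · simp only [List.nodup_cons, List.mem_singleton, List.not_mem_nil, List.nodup_nil,
          and_true, not_false_iff, true_and]
        rw [Sym2.eq_iff]
        push_neg
        constructor
        · rintro rfl; exact absurd rfl hynez
        · rintro rfl; exact absurd rfl hxney.symm
      · intro e heP
        simp only [List.mem_cons, List.mem_singleton, List.not_mem_nil, or_false]
        rintro b (rfl | rfl) rfl
        · exact hyzP heP
        · exact hzxP heP
    · intro h
      have : c.length = P.length + 2 := by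
        rw [hc, Walk.length_append]
        simp
      rw [h] at this
      simp at this
    · rw [htail, List.nodup_append]
      refine ⟨?_, ?_, ?_⟩
      · have := hP.support_nodup
        rw [P.support_eq_cons] at this
        exact (List.nodup_cons.mp this).2
      · simp [hznex]
      · intro a ha
        simp only [List.mem_cons, List.mem_singleton, List.not_mem_nil, or_false]
        rintro b (rfl | rfl) rfl
        · exact hztail ha
        · exact hxtail ha
  · refine ⟨x, y, c.start_mem_support, ?_, hxy, ?_⟩
    · rw [hc, Walk.support_append, List.mem_append]
      exact Or.inl P.end_mem_support
    · rw [hedg, List.mem_append]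
      rintro (h | h)
      · exact he h
      · simp only [List.mem_cons, List.mem_singleton, List.not_mem_nil, or_false] at h
        rcases h with h | h
        · rw [Sym2.eq_iff] at h
          rcases h with ⟨rfl, rfl⟩ | ⟨rfl, -⟩
          · exact absurd rfl hxney
          · exact absurd rfl hznex
        · rw [Sym2.eq_iff] at h
          rcases h with ⟨rfl, rfl⟩ | ⟨-, rfl⟩
          · exact absurd rfl hxney
          · exact absurd rfl hynez

/-- The main case: `w` is joined to `x` avoiding `z` and the edge `xy`, but `x` and `y`
are not so joined. -/
lemma caseB (hnc : NoChordedCycle G) {x y z w : V}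
    (hxy : G.Adj x y) (hyz : G.Adj y z) (hzx : G.Adj z x)
    (hwnex : w ≠ x)
    (hconnx : ∀ a b : V, a ≠ x → b ≠ x → ∃ W : G.Walk a b, x ∉ W.support)
    (hwx : Av G z s(x, y) w x) (hne : ¬ Av G z s(x, y) x y) : False := by
  classical
  obtain ⟨Q, hQx⟩ := hconnx w y hwnex hxy.ne'
  -- any walk avoiding x avoids the edge xy
  have edge_free : ∀ {a b : V} (W : G.Walk a b), x ∉ W.support → s(x, y) ∉ W.edges :=
    fun W hx h => hx (Walk.fst_mem_support_of_mem_edges W h)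
  have hzQ : z ∈ Q.support := by
    by_contra hzQ
    exact hne (hwx.symm.trans ⟨Q, hzQ, edge_free Q hQx⟩)
  set Q1 : G.Walk w z := Q.takeUntil z hzQ with hQ1
  have hxQ1 : x ∉ Q1.support := fun h => hQx (Walk.support_takeUntil_subset Q hzQ h)
  have hcount : Q1.support.count z = 1 := Q.count_support_takeUntil_eq_one hzQ
  have hyQ1 : y ∉ Q1.support := by
    intro hy
    set Q2 : G.Walk w y := Q1.takeUntil y hy with hQ2
    have hzQ2 : z ∉ Q2.support := by
      intro hzQ2
      have hspec := Q1.take_spec hy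
      have : Q1.support = Q2.support ++ (Q1.dropUntil y hy).support.tail := by
        conv_lhs => rw [← hspec]
        rw [Walk.support_append]
      have hzdrop : z ∈ (Q1.dropUntil y hy).support.tail := by
        have hzm : z ∈ (Q1.dropUntil y hy).support := Walk.end_mem_support _
        rw [(Q1.dropUntil y hy).support_eq_cons, List.mem_cons] at hzm
        rcases hzm with hzm | hzm
        · exact absurd hzm.symm hyz.ne
        · exact hzm
      have h1 : 0 < Q2.support.count z := List.count_pos_iff.mpr hzQ2
      have h2 : 0 < ((Q1.dropUntil y hy).support.tail).count z :=
        List.count_pos_iff.mpr hzdrop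
      rw [this, List.count_append] at hcount
      omega
    have hxQ2 : x ∉ Q2.support := fun h => hxQ1 (Walk.support_takeUntil_subset Q1 hy h)
    exact hne (hwx.symm.trans ⟨Q2, hzQ2, edge_free Q2 hxQ2⟩)
  obtain ⟨W0, hW0z, hW0e⟩ := hwx
  have hyW0 : y ∉ W0.support := by
    intro hy
    have hzd : z ∉ (W0.dropUntil y hy).support :=
      fun h => hW0z (Walk.support_dropUntil_subset W0 hy h)
    have hed : s(x, y) ∉ (W0.dropUntil y hy).edges :=
      fun h => hW0e (Walk.edges_dropUntil_subset W0 hy h)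
    exact hne (Av.symm ⟨W0.dropUntil y hy, hzd, hed⟩)
  set Wc : G.Walk x z := W0.reverse.append Q1 with hWc
  have hyWc : y ∉ Wc.support := by
    rw [hWc, Walk.support_append, List.mem_append]
    rintro (h | h)
    · rw [Walk.support_reverse, List.mem_reverse] at h
      exact hyW0 h
    · exact hyQ1 (List.mem_of_mem_tail h)
  have heWc : s(x, z) ∉ Wc.edges := by
    rw [hWc, Walk.edges_append, List.mem_append]
    rintro (h | h)
    · rw [Walk.edges_reverse, List.mem_reverse] at h
      exact hW0z (Walk.snd_mem_support_of_mem_edges W0 h)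
    · exact hxQ1 (Walk.fst_mem_support_of_mem_edges Q1 h)
  exact core hnc hzx.symm hyz.symm hxy.symm Wc.bypass Wc.bypass_isPath
    (fun h => hyWc (Wc.support_bypass_subset h))
    (fun h => heWc (Wc.edges_bypass_subset h))

end ChordAux

/-- Every biconnected graph of order at least 4 containing no chorded
cycle is triangle-free. -/
theorem stmt_3 {V : Type*} [Fintype V] (G : SimpleGraph V)
    (h2 : TwoConnected G) (hn : 4 ≤ Fintype.card V) (hnc : NoChordedCycle G) :
    G.CliqueFree 3 := by
  classical
  intro s hs
  rw [SimpleGraph.is3Clique_iff] at hs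
  obtain ⟨x, y, z, hxy, hxz, hyz, rfl⟩ := hs
  have hzx : G.Adj z x := hxz.symm
  -- find a fourth vertex
  obtain ⟨w, hw⟩ : ∃ w : V, w ∉ ({x, y, z} : Finset V) := by
    by_contra h
    push_neg at h
    have hsub : (Finset.univ : Finset V) ⊆ {x, y, z} := fun v _ => h v
    have hle := Finset.card_le_card hsub
    rw [Finset.card_univ] at hle
    have h3 : ({x, y, z} : Finset V).card ≤ 3 := by
      refine le_trans (Finset.card_insert_le _ _) ?_
      have : ({y, z} : Finset V).card ≤ 2 := by
        refine le_trans (Finset.card_insert_le _ _) ?_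
        simp
      omega
    omega
  simp only [Finset.mem_insert, Finset.mem_singleton, not_or] at hw
  obtain ⟨hwx, hwy, hwz⟩ := hw
  by_cases hA : ChordAux.Av G z s(x, y) x y
  · obtain ⟨W, h1, h2'⟩ := hA
    exact ChordAux.core hnc hxy hyz hzx W.bypass W.bypass_isPath
      (fun h => h1 (W.support_bypass_subset h))
      (fun h => h2' (W.edges_bypass_subset h))
  · obtain ⟨Q0, hQ0⟩ := ChordAux.conn_avoid (h2.2 z) hwz hxz.ne
    rcases ChordAux.dichotomy Q0 hQ0 with h | h | h
    · exact ChordAux.caseB hnc hxy hyz hzx hwx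
        (fun a b ha hb => ChordAux.conn_avoid (h2.2 x) ha hb) h hA
    · exact ChordAux.caseB hnc hxy hyz hzx hwx
        (fun a b ha hb => ChordAux.conn_avoid (h2.2 x) ha hb) h hA
    · refine ChordAux.caseB hnc hxy.symm hxz hyz.symm hwy
        (fun a b ha hb => ChordAux.conn_avoid (h2.2 y) ha hb) ?_ ?_
      · rw [Sym2.eq_swap (a := y) (b := x)]
        exact h
      · intro hh
        apply hA
        rw [Sym2.eq_swap (a := x) (b := y)]
        exact hh.symm
end

section
/- Let C₁, ..., C_r be a set of r vertex-disjoint chorded cycles in a graph G minimizing the total number of vertices in the union of the cycles. If |C_i| ≥ 7 for some i, then C_i has at most two chords, and if it has exactly two chords, these chords cross. -/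
/-- Two chords of the cycle `c` cross: their endpoints alternate around the cycle
(positions taken along `c.support.tail`, which lists each vertex of the cycle once). -/
def Crossing {V : Type*} [DecidableEq V] {G : SimpleGraph V} {u : V} (c : G.Walk u u)
    (e₁ e₂ : Sym2 V) : Prop :=
  ∃ a b x y : V,
    ((e₁ = s(a, b) ∧ e₂ = s(x, y)) ∨ (e₁ = s(x, y) ∧ e₂ = s(a, b))) ∧
    c.support.tail.idxOf a < c.support.tail.idxOf x ∧
    c.support.tail.idxOf x < c.support.tail.idxOf b ∧
    c.support.tail.idxOf b < c.support.tail.idxOf y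

namespace ChordAux
open SimpleGraph Walk
variable {V : Type*} {G : SimpleGraph V}

lemma support_eq_map_getVert {u v : V} (p : G.Walk u v) :
    p.support = (List.range (p.length + 1)).map p.getVert := by
  induction p with
  | nil => simp [List.range_succ]
  | cons h q ih =>
    rw [Walk.support_cons, ih, Walk.length_cons]
    conv_rhs => rw [List.range_succ_eq_map, List.map_cons, List.map_map]
    simp [Function.comp_def, Walk.getVert_cons_succ]

lemma edge_getVert_mem {u v : V} (p : G.Walk u v) {k : ℕ} (hk : k < p.length) :
    s(p.getVert k, p.getVert (k + 1)) ∈ p.edges := by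
  induction p generalizing k with
  | nil => simp at hk
  | cons h q ih =>
    cases k with
    | zero =>
      simp [Walk.getVert_cons_succ]
    | succ k =>
      rw [Walk.length_cons] at hk
      simp only [Walk.getVert_cons_succ, Walk.edges_cons, List.mem_cons]
      exact Or.inr (ih (Nat.lt_of_succ_lt_succ hk))

lemma getVert_drop' {u v : V} (p : G.Walk u v) (i j : ℕ) :
    (p.drop i).getVert j = p.getVert (i + j) := by
  induction p generalizing i with
  | nil => cases i <;> rfl
  | cons h q ih =>
    cases i with
    | zero => simp [Walk.drop]
    | succ i =>
      show (q.drop i).getVert j = _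
      rw [ih]
      have hh : i + 1 + j = (i + j) + 1 := by omega
      rw [hh, Walk.getVert_cons_succ]

lemma edges_drop_subset' {u v : V} (p : G.Walk u v) (i : ℕ) :
    (p.drop i).edges ⊆ p.edges := by
  induction p generalizing i with
  | nil => cases i <;> simp [Walk.drop]
  | cons h q ih =>
    cases i with
    | zero => simp [Walk.drop]
    | succ i =>
      show (q.drop i).edges ⊆ _
      rw [Walk.edges_cons]
      exact List.Subset.trans (ih i) (List.subset_cons_self _ _)

lemma length_drop' {u v : V} (p : G.Walk u v) (i : ℕ) :
    (p.drop i).length = p.length - i := by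
  induction p generalizing i with
  | nil => cases i <;> simp [Walk.drop]
  | cons h q ih =>
    cases i with
    | zero => simp [Walk.drop]
    | succ i =>
      show (q.drop i).length = _
      rw [ih, Walk.length_cons]
      omega

/-- take the first `k` darts of a walk -/
def take' {u v : V} : (p : G.Walk u v) → (k : ℕ) → G.Walk u (p.getVert k)
  | .nil, _ => .nil
  | .cons _ _, 0 => .nil
  | .cons h q, (k + 1) => .cons h (take' q k)

lemma length_take' {u v : V} (p : G.Walk u v) (k : ℕ) (hk : k ≤ p.length) :
    (take' p k).length = k := by
  induction p generalizing k with
  | nil =>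
    simp only [Walk.length_nil, Nat.le_zero] at hk
    subst hk
    rfl
  | cons h q ih =>
    cases k with
    | zero => rfl
    | succ k =>
      rw [Walk.length_cons] at hk
      show (Walk.cons h (take' q k)).length = k + 1
      rw [Walk.length_cons, ih k (by omega)]

lemma support_take' {u v : V} (p : G.Walk u v) (k : ℕ) (hk : k ≤ p.length) :
    (take' p k).support = (List.range (k + 1)).map p.getVert := by
  induction p generalizing k with
  | nil =>
    simp only [Walk.length_nil, Nat.le_zero] at hk
    subst hk
    simp [take', List.range_succ]
  | cons h q ih =>
    cases k with
    | zero => rfl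
    | succ k =>
      rw [Walk.length_cons] at hk
      show (Walk.cons h (take' q k)).support = _
      rw [Walk.support_cons, ih k (by omega)]
      conv_rhs => rw [List.range_succ_eq_map, List.map_cons, List.map_map]
      simp [Function.comp_def, Walk.getVert_cons_succ]

lemma edges_take'_subset {u v : V} (p : G.Walk u v) (k : ℕ) :
    (take' p k).edges ⊆ p.edges := by
  induction p generalizing k with
  | nil => cases k <;> simp [take']
  | cons h q ih =>
    cases k with
    | zero => exact List.nil_subset _
    | succ k =>
      show (Walk.cons h (take' q k)).edges ⊆ _
      rw [Walk.edges_cons, Walk.edges_cons]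
      exact List.cons_subset_cons _ (ih k)

lemma getVert_mem_support {u v : V} (p : G.Walk u v) (k : ℕ) :
    p.getVert k ∈ p.support := by
  by_cases hk : k ≤ p.length
  · rw [support_eq_map_getVert]
    exact List.mem_map_of_mem (List.mem_range.2 (by omega))
  · rw [Walk.getVert_of_length_le _ (by omega)]
    exact Walk.end_mem_support p


set_option linter.unusedSectionVars false

section Cycle
open SimpleGraph Walk
variable {V : Type*} [DecidableEq V] {G : SimpleGraph V} {u : V} {c : G.Walk u u}

/-- position of a vertex in the cycle: index in `c.support.tail`. -/
noncomputable def cpos (c : G.Walk u u) (x : V) : ℕ := c.support.tail.idxOf x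

lemma tail_eq_map (c : G.Walk u u) :
    c.support.tail = (List.range c.length).map (fun k => c.getVert (k + 1)) := by
  rw [support_eq_map_getVert]
  conv_lhs => rw [List.range_succ_eq_map, List.map_cons, List.map_map]
  simp [Function.comp_def]

lemma tail_length (c : G.Walk u u) : c.support.tail.length = c.length := by
  rw [tail_eq_map, List.length_map, List.length_range]

lemma tail_getElem (c : G.Walk u u) {k : ℕ} (hk : k < c.support.tail.length) :
    c.support.tail[k] = c.getVert (k + 1) := by
  rw [List.getElem_of_eq (tail_eq_map c) hk]
  simp

variable (hc : c.IsCycle)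
include hc

lemma three_le_length : 3 ≤ c.length := hc.three_le_length

lemma mem_tail_of_mem_support {x : V} (hx : x ∈ c.support) : x ∈ c.support.tail := by
  rw [Walk.support_eq_cons] at hx
  rcases List.mem_cons.1 hx with rfl | hx
  · rw [tail_eq_map]
    refine List.mem_map.2 ⟨c.length - 1, List.mem_range.2 (by have := hc.three_le_length; omega), ?_⟩
    rw [show c.length - 1 + 1 = c.length by have := hc.three_le_length; omega]
    exact c.getVert_length
  · exact hx

lemma cpos_lt {x : V} (hx : x ∈ c.support) : cpos c x < c.length := by
  have := List.idxOf_lt_length_iff.2 (mem_tail_of_mem_support hc hx)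
  rwa [tail_length] at this

lemma getVert_cpos {x : V} (hx : x ∈ c.support) : c.getVert (cpos c x + 1) = x := by
  have hm := mem_tail_of_mem_support hc hx
  have hl := List.idxOf_lt_length_iff.2 hm
  have := List.getElem_idxOf hl
  rwa [tail_getElem c] at this

lemma getVert_injOn {k k' : ℕ} (hk1 : 1 ≤ k) (hk2 : k ≤ c.length)
    (hk1' : 1 ≤ k') (hk2' : k' ≤ c.length) (h : c.getVert k = c.getVert k') : k = k' := by
  have hnd : c.support.tail.Nodup := ((Walk.isCycle_def c).1 hc).2.2
  have hlen : c.support.tail.length = c.length := by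
    rw [tail_eq_map, List.length_map, List.length_range]
  have e1 : c.support.tail[k - 1]'(by omega) = c.getVert k := by
    rw [tail_getElem c, show k - 1 + 1 = k by omega]
  have e2 : c.support.tail[k' - 1]'(by omega) = c.getVert k' := by
    rw [tail_getElem c, show k' - 1 + 1 = k' by omega]
  have := (hnd.getElem_inj_iff (hi := by omega) (hj := by omega)).1 (e1.trans (h.trans e2.symm))
  omega

lemma cpos_getVert {k : ℕ} (hk : k < c.length) : cpos c (c.getVert (k + 1)) = k := by
  have hmem : c.getVert (k + 1) ∈ c.support := getVert_mem_support c _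
  have h1 := getVert_cpos hc hmem
  have h2 := cpos_lt hc hmem
  have := getVert_injOn hc (k := cpos c (c.getVert (k+1)) + 1) (k' := k + 1)
    (by omega) (by omega) (by omega) (by omega) h1
  omega


omit hc

/-- index `k` in the doubled walk `c.append c`, for `1 ≤ k ≤ 2n`, corresponds to
tail position `(k-1) % n`. -/
lemma gv_low (c : G.Walk u u) {k : ℕ} (hk : k ≤ c.length) :
    (c.append c).getVert k = c.getVert k := by
  rw [Walk.getVert_append]
  rcases lt_or_eq_of_le hk with h | rfl
  · rw [if_pos h]
  · rw [if_neg (lt_irrefl _), Nat.sub_self]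
    simp

lemma gv_high (c : G.Walk u u) {k : ℕ} (hk : c.length ≤ k) :
    (c.append c).getVert k = c.getVert (k - c.length) := by
  rw [Walk.getVert_append, if_neg (by omega)]

lemma gv_mem (c : G.Walk u u) (k : ℕ) : (c.append c).getVert k ∈ c.support := by
  by_cases hk : k ≤ c.length
  · rw [gv_low c hk]; exact getVert_mem_support c k
  · rw [gv_high c (by omega)]; exact getVert_mem_support c _

include hc

lemma cpos_gv {k : ℕ} (h1 : 1 ≤ k) (h2 : k ≤ 2 * c.length) :
    cpos c ((c.append c).getVert k) = (k - 1) % c.length := by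
  have hn := hc.three_le_length
  by_cases hk : k ≤ c.length
  · rw [gv_low c hk, show k = (k - 1) + 1 by omega]
    rw [cpos_getVert hc (by omega), Nat.mod_eq_of_lt (by omega)]
    omega
  · rw [gv_high c (by omega), show k - c.length = (k - c.length - 1) + 1 by omega]
    rw [cpos_getVert hc (by omega)]
    rw [show k - 1 = (k - c.length - 1) + 1 * c.length by omega]
    rw [Nat.add_mul_mod_self_right, Nat.mod_eq_of_lt (by omega)]

lemma gv_inj {k k' : ℕ} (h1 : 1 ≤ k) (h2 : k ≤ k') (h3 : k' ≤ 2 * c.length)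
    (h4 : k' - k < c.length) (h : (c.append c).getVert k = (c.append c).getVert k') :
    k = k' := by
  have hn := hc.three_le_length
  have hp : (k - 1) % c.length = (k' - 1) % c.length := by
    rw [← cpos_gv hc h1 (by omega), ← cpos_gv hc (by omega) h3, h]
  have hd : c.length ∣ (k' - 1) - (k - 1) := (Nat.modEq_iff_dvd' (by omega)).1 hp
  have h0 : (k' - 1) - (k - 1) = 0 := Nat.eq_zero_of_dvd_of_lt hd (by omega)
  omega

/-- the arc of the doubled walk from index `i` to index `j`. -/
noncomputable def arc (c : G.Walk u u) (i j : ℕ) (hij : i ≤ j) :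
    G.Walk ((c.append c).getVert i) ((c.append c).getVert j) :=
  (take' ((c.append c).drop i) (j - i)).copy rfl
    (by rw [getVert_drop', Nat.add_sub_cancel' hij])

omit hc

lemma length_arc (c : G.Walk u u) {i j : ℕ} (hij : i ≤ j) (hj : j ≤ 2 * c.length) :
    (arc c i j hij).length = j - i := by
  rw [arc, Walk.length_copy, length_take']
  rw [length_drop', Walk.length_append]
  omega

lemma support_arc (c : G.Walk u u) {i j : ℕ} (hij : i ≤ j) (hj : j ≤ 2 * c.length) :
    (arc c i j hij).support
      = (List.range (j - i + 1)).map (fun t => (c.append c).getVert (i + t)) := by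
  rw [arc, Walk.support_copy, support_take']
  · apply List.map_congr_left
    intro t _
    rw [getVert_drop']
  · rw [length_drop', Walk.length_append]
    omega

lemma edges_arc_subset (c : G.Walk u u) {i j : ℕ} (hij : i ≤ j) {e : Sym2 V}
    (he : e ∈ (arc c i j hij).edges) : e ∈ c.edges := by
  rw [arc, Walk.edges_copy] at he
  have := edges_drop_subset' (c.append c) i (edges_take'_subset _ _ he)
  rw [Walk.edges_append] at this
  rcases List.mem_append.1 this with h | h <;> exact h


lemma mem_support_arc (c : G.Walk u u) {i j : ℕ} (hij : i ≤ j) (hj : j ≤ 2 * c.length) {z : V} :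
    z ∈ (arc c i j hij).support ↔ ∃ k, i ≤ k ∧ k ≤ j ∧ (c.append c).getVert k = z := by
  rw [support_arc c hij hj, List.mem_map]
  constructor
  · rintro ⟨t, ht, rfl⟩
    exact ⟨i + t, by omega, by have := List.mem_range.1 ht; omega, rfl⟩
  · rintro ⟨k, hk1, hk2, rfl⟩
    exact ⟨k - i, List.mem_range.2 (by omega), by rw [Nat.add_sub_cancel' hk1]⟩

lemma support_subset_arc (c : G.Walk u u) {i j : ℕ} (hij : i ≤ j) (hj : j ≤ 2 * c.length)
    {z : V} (hz : z ∈ (arc c i j hij).support) : z ∈ c.support := by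
  obtain ⟨k, -, -, rfl⟩ := (mem_support_arc c hij hj).1 hz
  exact gv_mem c k

include hc

lemma nodup_support_arc {i j : ℕ} (h1 : 1 ≤ i) (hij : i ≤ j) (hj : j ≤ 2 * c.length)
    (hwin : j - i < c.length) : (arc c i j hij).support.Nodup := by
  rw [support_arc c hij hj]
  refine List.Nodup.map_on ?_ List.nodup_range
  intro t ht t' ht' hgv
  have ht := List.mem_range.1 ht
  have ht' := List.mem_range.1 ht'
  rcases le_total (i + t) (i + t') with hle | hle
  · have := gv_inj hc (k := i + t) (k' := i + t') (by omega) hle (by omega) (by omega) hgv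
    omega
  · have := gv_inj hc (k := i + t') (k' := i + t) (by omega) hle (by omega) (by omega) hgv.symm
    omega

lemma one_arc {i j : ℕ} (h1 : 1 ≤ i) (hij : i + 2 ≤ j) (hj : j ≤ 2 * c.length)
    (hwin : j - i ≤ c.length - 2)
    (hadj : G.Adj ((c.append c).getVert j) ((c.append c).getVert i))
    (hche : s((c.append c).getVert j, (c.append c).getVert i) ∉ c.edges)
    {x y : V} (hxy : G.Adj x y) (hexy : s(x, y) ∉ c.edges)
    (hne : s(x, y) ≠ s((c.append c).getVert j, (c.append c).getVert i))
    {kx ky : ℕ} (hkx1 : i ≤ kx) (hkx2 : kx ≤ j) (hx : (c.append c).getVert kx = x)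
    (hky1 : i ≤ ky) (hky2 : ky ≤ j) (hy : (c.append c).getVert ky = y) :
    ∃ (z : V) (D : G.Walk z z), D.IsCycle ∧ HasChord G D ∧
      (∀ t ∈ D.support, t ∈ c.support) ∧ D.length < c.length := by
  have hn := hc.three_le_length
  have hij' : i ≤ j := by omega
  set A := arc c i j hij' with hA
  refine ⟨_, Walk.cons hadj A, ?_, ?_, ?_, ?_⟩
  · rw [Walk.cons_isCycle_iff]
    constructor
    · rw [Walk.isPath_def]
      exact nodup_support_arc hc h1 hij' hj (by omega)
    · intro hmem
      exact hche (edges_arc_subset c hij' hmem)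
  · refine ⟨x, y, ?_, ?_, hxy, ?_⟩
    · rw [Walk.support_cons]
      exact List.mem_cons_of_mem _ ((mem_support_arc c hij' hj).2 ⟨kx, hkx1, hkx2, hx⟩)
    · rw [Walk.support_cons]
      exact List.mem_cons_of_mem _ ((mem_support_arc c hij' hj).2 ⟨ky, hky1, hky2, hy⟩)
    · rw [Walk.edges_cons]
      intro hmem'
      rcases List.mem_cons.1 hmem' with h | h
      · exact hne h
      · exact hexy (edges_arc_subset c hij' h)
  · intro t ht
    rw [Walk.support_cons] at ht
    rcases List.mem_cons.1 ht with rfl | ht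
    · exact gv_mem c j
    · exact support_subset_arc c hij' hj ht
  · rw [Walk.length_cons, length_arc c hij' hj]
    omega

lemma two_arc {i1 j1 i2 j2 : ℕ}
    (h0 : 1 ≤ i1) (h1 : i1 < j1) (h2 : j1 < i2) (h3 : i2 ≤ j2) (h4 : j2 ≤ 2 * c.length)
    (hwin : j2 - i1 ≤ c.length - 1)
    (hlen : (j1 - i1) + (j2 - i2) + 3 ≤ c.length)
    (hadjA : G.Adj ((c.append c).getVert j1) ((c.append c).getVert j2))
    (hadjB : G.Adj ((c.append c).getVert i2) ((c.append c).getVert i1))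
    (hcheA : s((c.append c).getVert j1, (c.append c).getVert j2) ∉ c.edges)
    (hcheB : s((c.append c).getVert i2, (c.append c).getVert i1) ∉ c.edges)
    {x y : V} (hxy : G.Adj x y) (hexy : s(x, y) ∉ c.edges)
    (hneA : s(x, y) ≠ s((c.append c).getVert j1, (c.append c).getVert j2))
    (hneB : s(x, y) ≠ s((c.append c).getVert i2, (c.append c).getVert i1))
    {kx ky : ℕ} (hkx1 : i1 ≤ kx) (hkx2 : kx ≤ j1) (hx : (c.append c).getVert kx = x)
    (hky1 : i2 ≤ ky) (hky2 : ky ≤ j2) (hy : (c.append c).getVert ky = y) :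
    ∃ (z : V) (D : G.Walk z z), D.IsCycle ∧ HasChord G D ∧
      (∀ t ∈ D.support, t ∈ c.support) ∧ D.length < c.length := by
  have hn := hc.three_le_length
  have hij1 : i1 ≤ j1 := by omega
  have hij2 : i2 ≤ j2 := h3
  have hj1 : j1 ≤ 2 * c.length := by omega
  set A1 := arc c i1 j1 hij1 with hA1
  set A2 := arc c i2 j2 hij2 with hA2
  set P : G.Walk ((c.append c).getVert i1) ((c.append c).getVert i2) :=
    A1.append (Walk.cons hadjA A2.reverse) with hP
  -- injectivity helper on the window [i1, j2]
  have hinj : ∀ k k', i1 ≤ k → k ≤ j2 → i1 ≤ k' → k' ≤ j2 →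
      (c.append c).getVert k = (c.append c).getVert k' → k = k' := by
    intro k k' ha hb ha' hb' hgv
    rcases le_total k k' with hle | hle
    · exact gv_inj hc (by omega) hle (by omega) (by omega) hgv
    · exact (gv_inj hc (by omega) hle (by omega) (by omega) hgv.symm).symm
  -- membership in P
  have hPsup : P.support = A1.support ++ A2.reverse.support := by
    rw [hP, Walk.support_append, Walk.support_cons, List.tail_cons]
  have hmemP : ∀ z, z ∈ P.support ↔
      (∃ k, i1 ≤ k ∧ k ≤ j1 ∧ (c.append c).getVert k = z) ∨
      (∃ k, i2 ≤ k ∧ k ≤ j2 ∧ (c.append c).getVert k = z) := by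
    intro z
    rw [hPsup, List.mem_append, Walk.support_reverse, List.mem_reverse,
      mem_support_arc c hij1 hj1, mem_support_arc c hij2 h4]
  -- edges of P
  have hedgeP : ∀ e, e ∈ P.edges → e ∈ c.edges ∨
      e = s((c.append c).getVert j1, (c.append c).getVert j2) := by
    intro e he
    rw [hP, Walk.edges_append, List.mem_append, Walk.edges_cons] at he
    rcases he with he | he
    · exact Or.inl (edges_arc_subset c hij1 he)
    · rcases List.mem_cons.1 he with rfl | he
      · exact Or.inr rfl
      · rw [Walk.edges_reverse, List.mem_reverse] at he
        exact Or.inl (edges_arc_subset c hij2 he)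
  have hPpath : P.IsPath := by
    rw [Walk.isPath_def, hPsup]
    rw [List.nodup_append]
    refine ⟨nodup_support_arc hc h0 hij1 hj1 (by omega), ?_, ?_⟩
    · rw [Walk.support_reverse]
      exact List.nodup_reverse.2 (nodup_support_arc hc (by omega) hij2 h4 (by omega))
    · intro z hz1 w hz2 rfl
      rw [Walk.support_reverse, List.mem_reverse] at hz2
      obtain ⟨k, hk1, hk2, hk3⟩ := (mem_support_arc c hij1 hj1).1 hz1
      obtain ⟨k', hk1', hk2', hk3'⟩ := (mem_support_arc c hij2 h4).1 hz2
      have := hinj k k' (by omega) (by omega) (by omega) (by omega) (hk3.trans hk3'.symm)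
      omega
  have hBA : s((c.append c).getVert i2, (c.append c).getVert i1)
      ≠ s((c.append c).getVert j1, (c.append c).getVert j2) := by
    intro h
    rcases Sym2.eq_iff.1 h with ⟨ha, hb⟩ | ⟨ha, hb⟩
    · have := hinj i2 j1 (by omega) (by omega) (by omega) (by omega) ha
      omega
    · have := hinj i1 j1 (by omega) (by omega) (by omega) (by omega) hb
      omega
  refine ⟨_, Walk.cons hadjB P, ?_, ?_, ?_, ?_⟩
  · rw [Walk.cons_isCycle_iff]
    refine ⟨hPpath, ?_⟩
    intro hmem
    rcases hedgeP _ hmem with h | h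
    · exact hcheB h
    · exact hBA h
  · refine ⟨x, y, ?_, ?_, hxy, ?_⟩
    · rw [Walk.support_cons]
      exact List.mem_cons_of_mem _ ((hmemP x).2 (Or.inl ⟨kx, hkx1, hkx2, hx⟩))
    · rw [Walk.support_cons]
      exact List.mem_cons_of_mem _ ((hmemP y).2 (Or.inr ⟨ky, hky1, hky2, hy⟩))
    · rw [Walk.edges_cons]
      intro hmem'
      rcases List.mem_cons.1 hmem' with h | h
      · exact hneB h
      · rcases hedgeP _ h with h | h
        · exact hexy h
        · exact hneA h
  · intro t ht
    rw [Walk.support_cons] at ht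
    rcases List.mem_cons.1 ht with rfl | ht
    · exact gv_mem c i2
    · rcases (hmemP t).1 ht with ⟨k, -, -, rfl⟩ | ⟨k, -, -, rfl⟩ <;> exact gv_mem c k
  · rw [Walk.length_cons, hP, Walk.length_append, Walk.length_cons, Walk.length_reverse,
      hA1, hA2, length_arc c hij1 hj1, length_arc c hij2 h4]
    omega


lemma gv_cpos {z : V} (hz : z ∈ c.support) :
    (c.append c).getVert (cpos c z + 1) = z := by
  rw [gv_low c (by have := cpos_lt hc hz; omega)]
  exact getVert_cpos hc hz

lemma gv_cpos' {z : V} (hz : z ∈ c.support) :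
    (c.append c).getVert (cpos c z + 1 + c.length) = z := by
  rw [gv_high c (by omega), Nat.add_sub_cancel]
  exact getVert_cpos hc hz

lemma cpos_inj {x y : V} (hx : x ∈ c.support) (hy : y ∈ c.support)
    (h : cpos c x = cpos c y) : x = y := by
  rw [← getVert_cpos hc hx, ← getVert_cpos hc hy, h]

lemma chord_gap {x y : V} (hx : x ∈ c.support) (hy : y ∈ c.support)
    (he : s(x, y) ∉ c.edges) (hlt : cpos c x < cpos c y) :
    cpos c x + 2 ≤ cpos c y ∧ cpos c y + 2 ≤ cpos c x + c.length := by
  have hn := hc.three_le_length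
  have hqx := cpos_lt hc hx
  have hqy := cpos_lt hc hy
  constructor
  · by_contra h
    apply he
    have hthis := edge_getVert_mem c (k := cpos c x + 1) (by omega)
    rw [getVert_cpos hc hx, show cpos c x + 1 + 1 = cpos c y + 1 by omega,
      getVert_cpos hc hy] at hthis
    exact hthis
  · by_contra h
    apply he
    have hx0 : cpos c x = 0 := by omega
    have hyn : cpos c y = c.length - 1 := by omega
    have hyu : y = c.getVert 0 := by
      have h1 := getVert_cpos hc hy
      rw [hyn, show c.length - 1 + 1 = c.length by omega, Walk.getVert_length] at h1
      rw [Walk.getVert_zero, ← h1]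
    have hthis := edge_getVert_mem c (k := 0) (by omega)
    rw [show (0 : ℕ) + 1 = cpos c x + 1 by omega, getVert_cpos hc hx, ← hyu] at hthis
    rwa [Sym2.eq_swap]

lemma chord_sorted {e : Sym2 V} (he1 : e ∈ G.edgeSet) (he2 : ∀ x ∈ e, x ∈ c.support) :
    ∃ a b : V, e = s(a, b) ∧ G.Adj a b ∧ a ∈ c.support ∧ b ∈ c.support ∧
      cpos c a < cpos c b := by
  revert he1 he2
  refine Sym2.ind (fun a b => ?_) e
  intro he1 he2
  have hadj : G.Adj a b := he1
  have ha : a ∈ c.support := he2 a (Sym2.mem_mk_left a b)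
  have hb : b ∈ c.support := he2 b (Sym2.mem_mk_right a b)
  have hne : cpos c a ≠ cpos c b := fun h => hadj.ne (cpos_inj hc ha hb h)
  rcases lt_or_gt_of_ne hne with h | h
  · exact ⟨a, b, rfl, hadj, ha, hb, h⟩
  · exact ⟨b, a, Sym2.eq_swap, hadj.symm, hb, ha, h⟩

lemma pattern_of_crossing {e₁ e₂ : Sym2 V} {a1 b1 a2 b2 : V}
    (h1 : e₁ = s(a1, b1)) (h2 : e₂ = s(a2, b2))
    (s1 : cpos c a1 < cpos c b1) (s2 : cpos c a2 < cpos c b2)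
    (hcr : Crossing c e₁ e₂) :
    (cpos c a1 < cpos c a2 ∧ cpos c a2 < cpos c b1 ∧ cpos c b1 < cpos c b2) ∨
    (cpos c a2 < cpos c a1 ∧ cpos c a1 < cpos c b2 ∧ cpos c b2 < cpos c b1) := by
  obtain ⟨a, b, x, y, hor, i1, i2, i3⟩ := hcr
  have key : ∀ z : V, c.support.tail.idxOf z = cpos c z := fun _ => rfl
  rw [key, key] at i1 i2 i3
  rcases hor with ⟨ea, eb⟩ | ⟨ea, eb⟩
  · rcases Sym2.eq_iff.1 (h1.symm.trans ea) with ⟨rfl, rfl⟩ | ⟨rfl, rfl⟩ <;>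
      rcases Sym2.eq_iff.1 (h2.symm.trans eb) with ⟨rfl, rfl⟩ | ⟨rfl, rfl⟩ <;>
      omega
  · rcases Sym2.eq_iff.1 (h1.symm.trans ea) with ⟨rfl, rfl⟩ | ⟨rfl, rfl⟩ <;>
      rcases Sym2.eq_iff.1 (h2.symm.trans eb) with ⟨rfl, rfl⟩ | ⟨rfl, rfl⟩ <;>
      omega

/-- Case A: two non-crossing chords give a shorter chorded cycle. -/
lemma noncross_core {x1 y1 x2 y2 : V}
    (m1 : x1 ∈ c.support) (m2 : y1 ∈ c.support) (m3 : x2 ∈ c.support) (m4 : y2 ∈ c.support)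
    (adj1 : G.Adj x1 y1) (adj2 : G.Adj x2 y2)
    (ne1 : s(x1, y1) ∉ c.edges) (ne2 : s(x2, y2) ∉ c.edges)
    (d : s(x1, y1) ≠ s(x2, y2))
    (s1 : cpos c x1 < cpos c y1) (s2 : cpos c x2 < cpos c y2)
    (hncr : ¬ Crossing c s(x1, y1) s(x2, y2)) :
    ∃ (z : V) (D : G.Walk z z), D.IsCycle ∧ HasChord G D ∧
      (∀ t ∈ D.support, t ∈ c.support) ∧ D.length < c.length := by
  have hn := hc.three_le_length
  have g1 := chord_gap hc m1 m2 ne1 s1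
  have g2 := chord_gap hc m3 m4 ne2 s2
  have lx1 := cpos_lt hc m1
  have ly1 := cpos_lt hc m2
  have lx2 := cpos_lt hc m3
  have ly2 := cpos_lt hc m4
  have np1 : ¬(cpos c x1 < cpos c x2 ∧ cpos c x2 < cpos c y1 ∧ cpos c y1 < cpos c y2) := by
    rintro ⟨u1, u2, u3⟩
    exact hncr ⟨x1, y1, x2, y2, Or.inl ⟨rfl, rfl⟩, u1, u2, u3⟩
  have np2 : ¬(cpos c x2 < cpos c x1 ∧ cpos c x1 < cpos c y2 ∧ cpos c y2 < cpos c y1) := by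
    rintro ⟨u1, u2, u3⟩
    exact hncr ⟨x2, y2, x1, y1, Or.inr ⟨rfl, rfl⟩, u1, u2, u3⟩
  have hpair : ¬(cpos c x1 = cpos c x2 ∧ cpos c y1 = cpos c y2) := by
    rintro ⟨u1, u2⟩
    exact d (by rw [cpos_inj hc m1 m3 u1, cpos_inj hc m2 m4 u2])
  have tri : (cpos c x1 ≤ cpos c x2 ∧ cpos c y2 ≤ cpos c y1) ∨
      (cpos c x2 ≤ cpos c x1 ∧ cpos c y1 ≤ cpos c y2) ∨
      (cpos c y2 ≤ cpos c x1 ∨ cpos c y1 ≤ cpos c x2) := by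
    rcases lt_trichotomy (cpos c x1) (cpos c x2) with h | h | h
    · rcases le_or_gt (cpos c y2) (cpos c y1) with h' | h'
      · exact Or.inl ⟨le_of_lt h, h'⟩
      · rcases le_or_gt (cpos c y1) (cpos c x2) with h'' | h''
        · exact Or.inr (Or.inr (Or.inr h''))
        · exact absurd ⟨h, h'', h'⟩ np1
    · rcases lt_trichotomy (cpos c y2) (cpos c y1) with h' | h' | h'
      · exact Or.inl ⟨le_of_eq h, le_of_lt h'⟩
      · exact absurd ⟨h, h'.symm⟩ hpair
      · exact Or.inr (Or.inl ⟨le_of_eq h.symm, le_of_lt h'⟩)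
    · rcases le_or_gt (cpos c y1) (cpos c y2) with h' | h'
      · exact Or.inr (Or.inl ⟨le_of_lt h, h'⟩)
      · rcases le_or_gt (cpos c y2) (cpos c x1) with h'' | h''
        · exact Or.inr (Or.inr (Or.inl h''))
        · exact absurd ⟨h, h'', h'⟩ np2
  rcases tri with ⟨u1, u2⟩ | ⟨u1, u2⟩ | hC
  · -- chord 2 inside the arc of chord 1
    refine one_arc hc (i := cpos c x1 + 1) (j := cpos c y1 + 1)
      (by omega) (by omega) (by omega) (by omega)
      (by rw [gv_cpos hc m2, gv_cpos hc m1]; exact adj1.symm)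
      (by rw [gv_cpos hc m2, gv_cpos hc m1, Sym2.eq_swap]; exact ne1)
      adj2 ne2
      (by rw [gv_cpos hc m2, gv_cpos hc m1, show s(y1, x1) = s(x1, y1) from Sym2.eq_swap]
          exact d.symm)
      (kx := cpos c x2 + 1) (ky := cpos c y2 + 1)
      (by omega) (by omega) (gv_cpos hc m3) (by omega) (by omega) (gv_cpos hc m4)
  · -- chord 1 inside the arc of chord 2
    refine one_arc hc (i := cpos c x2 + 1) (j := cpos c y2 + 1)
      (by omega) (by omega) (by omega) (by omega)
      (by rw [gv_cpos hc m4, gv_cpos hc m3]; exact adj2.symm)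
      (by rw [gv_cpos hc m4, gv_cpos hc m3, Sym2.eq_swap]; exact ne2)
      adj1 ne1
      (by rw [gv_cpos hc m4, gv_cpos hc m3, show s(y2, x2) = s(x2, y2) from Sym2.eq_swap]
          exact d)
      (kx := cpos c x1 + 1) (ky := cpos c y1 + 1)
      (by omega) (by omega) (gv_cpos hc m1) (by omega) (by omega) (gv_cpos hc m2)
  · -- chord 2 inside the wrap-around arc of chord 1
    have hij : cpos c y1 + 1 + 2 ≤ cpos c x1 + 1 + c.length := by omega
    have hjb : cpos c x1 + 1 + c.length ≤ 2 * c.length := by omega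
    have hwin : (cpos c x1 + 1 + c.length) - (cpos c y1 + 1) ≤ c.length - 2 := by omega
    rcases hC with hC | hC
    · refine one_arc hc (i := cpos c y1 + 1) (j := cpos c x1 + 1 + c.length)
        (by omega) hij hjb hwin
        (by rw [gv_cpos' hc m1, gv_cpos hc m2]; exact adj1)
        (by rw [gv_cpos' hc m1, gv_cpos hc m2]; exact ne1)
        adj2 ne2
        (by rw [gv_cpos' hc m1, gv_cpos hc m2]; exact d.symm)
        (kx := cpos c x2 + 1 + c.length) (ky := cpos c y2 + 1 + c.length)
        (by omega) (by omega) (gv_cpos' hc m3) (by omega) (by omega) (gv_cpos' hc m4)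
    · refine one_arc hc (i := cpos c y1 + 1) (j := cpos c x1 + 1 + c.length)
        (by omega) hij hjb hwin
        (by rw [gv_cpos' hc m1, gv_cpos hc m2]; exact adj1)
        (by rw [gv_cpos' hc m1, gv_cpos hc m2]; exact ne1)
        adj2 ne2
        (by rw [gv_cpos' hc m1, gv_cpos hc m2]; exact d.symm)
        (kx := cpos c x2 + 1) (ky := cpos c y2 + 1)
        (by omega) (by omega) (gv_cpos hc m3) (by omega) (by omega) (gv_cpos hc m4)


/-- Case B core: three pairwise crossing chords in sorted position order give a
shorter chorded cycle when the cycle has length at least 7. -/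
lemma three_core (hn : 7 ≤ c.length) {x1 y1 x2 y2 x3 y3 : V}
    (m1 : x1 ∈ c.support) (m2 : y1 ∈ c.support) (m3 : x2 ∈ c.support) (m4 : y2 ∈ c.support)
    (m5 : x3 ∈ c.support) (m6 : y3 ∈ c.support)
    (adj1 : G.Adj x1 y1) (adj2 : G.Adj x2 y2) (adj3 : G.Adj x3 y3)
    (ne1 : s(x1, y1) ∉ c.edges) (ne2 : s(x2, y2) ∉ c.edges) (ne3 : s(x3, y3) ∉ c.edges)
    (d12 : s(x1, y1) ≠ s(x2, y2)) (d13 : s(x1, y1) ≠ s(x3, y3)) (d23 : s(x2, y2) ≠ s(x3, y3))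
    (ch1 : cpos c x1 < cpos c x2) (ch2 : cpos c x2 < cpos c x3) (ch3 : cpos c x3 < cpos c y1)
    (ch4 : cpos c y1 < cpos c y2) (ch5 : cpos c y2 < cpos c y3) :
    ∃ (z : V) (D : G.Walk z z), D.IsCycle ∧ HasChord G D ∧
      (∀ t ∈ D.support, t ∈ c.support) ∧ D.length < c.length := by
  have l1 := cpos_lt hc m1
  have l6 := cpos_lt hc m6
  have l2 := cpos_lt hc m2
  have l3 := cpos_lt hc m3
  have l4 := cpos_lt hc m4
  have l5 := cpos_lt hc m5
  have gaps : (3 ≤ (cpos c y1 - cpos c x3) + (c.length - cpos c y3 + cpos c x1)) ∨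
      (3 ≤ (cpos c x2 - cpos c x1) + (cpos c y2 - cpos c y1)) ∨
      (3 ≤ (cpos c x3 - cpos c x2) + (cpos c y3 - cpos c y2)) := by omega
  rcases gaps with hg | hg | hg
  · -- omit gaps (x3,y1) and (y3,x1): cycle through chords 1 and 3, containing chord 2
    refine two_arc hc (i1 := cpos c x1 + 1) (j1 := cpos c x3 + 1)
      (i2 := cpos c y1 + 1) (j2 := cpos c y3 + 1)
      (by omega) (by omega) (by omega) (by omega) (by omega) (by omega) (by omega)
      (by rw [gv_cpos hc m5, gv_cpos hc m6]; exact adj3)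
      (by rw [gv_cpos hc m2, gv_cpos hc m1]; exact adj1.symm)
      (by rw [gv_cpos hc m5, gv_cpos hc m6]; exact ne3)
      (by rw [gv_cpos hc m2, gv_cpos hc m1, Sym2.eq_swap]; exact ne1)
      adj2 ne2
      (by rw [gv_cpos hc m5, gv_cpos hc m6]; exact d23)
      (by rw [gv_cpos hc m2, gv_cpos hc m1, show s(y1, x1) = s(x1, y1) from Sym2.eq_swap]
          exact d12.symm)
      (kx := cpos c x2 + 1) (ky := cpos c y2 + 1)
      (by omega) (by omega) (gv_cpos hc m3) (by omega) (by omega) (gv_cpos hc m4)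
  · -- omit gaps (x1,x2) and (y1,y2): cycle through chords 1 and 2, containing chord 3
    refine two_arc hc (i1 := cpos c x2 + 1) (j1 := cpos c y1 + 1)
      (i2 := cpos c y2 + 1) (j2 := cpos c x1 + 1 + c.length)
      (by omega) (by omega) (by omega) (by omega) (by omega) (by omega) (by omega)
      (by rw [gv_cpos hc m2, gv_cpos' hc m1]; exact adj1.symm)
      (by rw [gv_cpos hc m4, gv_cpos hc m3]; exact adj2.symm)
      (by rw [gv_cpos hc m2, gv_cpos' hc m1, Sym2.eq_swap]; exact ne1)
      (by rw [gv_cpos hc m4, gv_cpos hc m3, Sym2.eq_swap]; exact ne2)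
      adj3 ne3
      (by rw [gv_cpos hc m2, gv_cpos' hc m1, show s(y1, x1) = s(x1, y1) from Sym2.eq_swap]
          exact d13.symm)
      (by rw [gv_cpos hc m4, gv_cpos hc m3, show s(y2, x2) = s(x2, y2) from Sym2.eq_swap]
          exact d23.symm)
      (kx := cpos c x3 + 1) (ky := cpos c y3 + 1)
      (by omega) (by omega) (gv_cpos hc m5) (by omega) (by omega) (gv_cpos hc m6)
  · -- omit gaps (x2,x3) and (y2,y3): cycle through chords 2 and 3, containing chord 1
    refine two_arc hc (i1 := cpos c x3 + 1) (j1 := cpos c y2 + 1)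
      (i2 := cpos c y3 + 1) (j2 := cpos c x2 + 1 + c.length)
      (by omega) (by omega) (by omega) (by omega) (by omega) (by omega) (by omega)
      (by rw [gv_cpos hc m4, gv_cpos' hc m3]; exact adj2.symm)
      (by rw [gv_cpos hc m6, gv_cpos hc m5]; exact adj3.symm)
      (by rw [gv_cpos hc m4, gv_cpos' hc m3, Sym2.eq_swap]; exact ne2)
      (by rw [gv_cpos hc m6, gv_cpos hc m5, Sym2.eq_swap]; exact ne3)
      adj1.symm
      (by rw [Sym2.eq_swap]; exact ne1)
      (by rw [gv_cpos hc m4, gv_cpos' hc m3, show s(y1, x1) = s(x1, y1) from Sym2.eq_swap,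
          show s(y2, x2) = s(x2, y2) from Sym2.eq_swap]
          exact d12)
      (by rw [gv_cpos hc m6, gv_cpos hc m5, show s(y1, x1) = s(x1, y1) from Sym2.eq_swap,
          show s(y3, x3) = s(x3, y3) from Sym2.eq_swap]
          exact d13)
      (kx := cpos c y1 + 1) (ky := cpos c x1 + 1 + c.length)
      (by omega) (by omega) (gv_cpos hc m2) (by omega) (by omega) (gv_cpos' hc m1)

/-- Three pairwise crossing chords in a cycle of length at least 7 give a shorter
chorded cycle. -/
lemma three_crossing_shorter (hn : 7 ≤ c.length) {e₁ e₂ e₃ : Sym2 V}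
    (he₁ : e₁ ∈ G.edgeSet) (hs₁ : ∀ x ∈ e₁, x ∈ c.support) (hc₁ : e₁ ∉ c.edges)
    (he₂ : e₂ ∈ G.edgeSet) (hs₂ : ∀ x ∈ e₂, x ∈ c.support) (hc₂ : e₂ ∉ c.edges)
    (he₃ : e₃ ∈ G.edgeSet) (hs₃ : ∀ x ∈ e₃, x ∈ c.support) (hc₃ : e₃ ∉ c.edges)
    (d12 : e₁ ≠ e₂) (d13 : e₁ ≠ e₃) (d23 : e₂ ≠ e₃)
    (cr12 : Crossing c e₁ e₂) (cr13 : Crossing c e₁ e₃) (cr23 : Crossing c e₂ e₃) :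
    ∃ (z : V) (D : G.Walk z z), D.IsCycle ∧ HasChord G D ∧
      (∀ t ∈ D.support, t ∈ c.support) ∧ D.length < c.length := by
  obtain ⟨a1, b1, E1, adj1, ma1, mb1, s1⟩ := chord_sorted hc he₁ hs₁
  obtain ⟨a2, b2, E2, adj2, ma2, mb2, s2⟩ := chord_sorted hc he₂ hs₂
  obtain ⟨a3, b3, E3, adj3, ma3, mb3, s3⟩ := chord_sorted hc he₃ hs₃
  subst E1; subst E2; subst E3
  have p12 := pattern_of_crossing hc rfl rfl s1 s2 cr12
  have p13 := pattern_of_crossing hc rfl rfl s1 s3 cr13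
  have p23 := pattern_of_crossing hc rfl rfl s2 s3 cr23
  -- sort the three chords by the position of their first endpoint
  rcases lt_trichotomy (cpos c a1) (cpos c a2) with o12 | o12 | o12
  · rcases lt_trichotomy (cpos c a1) (cpos c a3) with o13 | o13 | o13
    · rcases lt_trichotomy (cpos c a2) (cpos c a3) with o23 | o23 | o23
      · -- order 1 2 3
        rcases p12 with q12 | q12 <;> rcases p13 with q13 | q13 <;> rcases p23 with q23 | q23 <;>
        exact three_core hc hn ma1 mb1 ma2 mb2 ma3 mb3 adj1 adj2 adj3 hc₁ hc₂ hc₃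
          d12 d13 d23 (by omega) (by omega) (by omega) (by omega) (by omega)
      · rcases p12 with q12 | q12 <;> rcases p13 with q13 | q13 <;> rcases p23 with q23 | q23 <;>
        exact absurd (by omega : cpos c a2 = cpos c a3) (by omega)
      · -- order 1 3 2
        rcases p12 with q12 | q12 <;> rcases p13 with q13 | q13 <;> rcases p23 with q23 | q23 <;>
        exact three_core hc hn ma1 mb1 ma3 mb3 ma2 mb2 adj1 adj3 adj2 hc₁ hc₃ hc₂
          d13 d12 d23.symm (by omega) (by omega) (by omega) (by omega) (by omega)
    · rcases p13 with q13 | q13 <;> exact absurd o13 (by omega)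
    · rcases lt_trichotomy (cpos c a2) (cpos c a3) with o23 | o23 | o23
      · -- order 3 1 2? no: a3 < a1 and a2 < a3 means order 2 3 1
        rcases p12 with q12 | q12 <;> rcases p13 with q13 | q13 <;> rcases p23 with q23 | q23 <;>
        exact three_core hc hn ma2 mb2 ma3 mb3 ma1 mb1 adj2 adj3 adj1 hc₂ hc₃ hc₁
          d23 d12.symm d13.symm (by omega) (by omega) (by omega) (by omega) (by omega)
      · rcases p23 with q23 | q23 <;> exact absurd o23 (by omega)
      · -- order 3 2 1? a2 > a1? no o12: a1 < a2... a3 < a1 < a2, order 3 1 2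
        rcases p12 with q12 | q12 <;> rcases p13 with q13 | q13 <;> rcases p23 with q23 | q23 <;>
        exact three_core hc hn ma3 mb3 ma1 mb1 ma2 mb2 adj3 adj1 adj2 hc₃ hc₁ hc₂
          d13.symm d23.symm d12 (by omega) (by omega) (by omega) (by omega) (by omega)
  · rcases p12 with q12 | q12 <;> exact absurd o12 (by omega)
  · rcases lt_trichotomy (cpos c a1) (cpos c a3) with o13 | o13 | o13
    · -- a2 < a1 < a3 : order 2 1 3
      rcases p12 with q12 | q12 <;> rcases p13 with q13 | q13 <;> rcases p23 with q23 | q23 <;>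
      exact three_core hc hn ma2 mb2 ma1 mb1 ma3 mb3 adj2 adj1 adj3 hc₂ hc₁ hc₃
        d12.symm d23 d13 (by omega) (by omega) (by omega) (by omega) (by omega)
    · rcases p13 with q13 | q13 <;> exact absurd o13 (by omega)
    · rcases lt_trichotomy (cpos c a2) (cpos c a3) with o23 | o23 | o23
      · -- a2 < a3 < a1 : order 2 3 1
        rcases p12 with q12 | q12 <;> rcases p13 with q13 | q13 <;> rcases p23 with q23 | q23 <;>
        exact three_core hc hn ma2 mb2 ma3 mb3 ma1 mb1 adj2 adj3 adj1 hc₂ hc₃ hc₁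
          d23 d12.symm d13.symm (by omega) (by omega) (by omega) (by omega) (by omega)
      · rcases p23 with q23 | q23 <;> exact absurd o23 (by omega)
      · -- a3 < a2 < a1 : order 3 2 1
        rcases p12 with q12 | q12 <;> rcases p13 with q13 | q13 <;> rcases p23 with q23 | q23 <;>
        exact three_core hc hn ma3 mb3 ma2 mb2 ma1 mb1 adj3 adj2 adj1 hc₃ hc₂ hc₁
          d23.symm d13.symm d12.symm (by omega) (by omega) (by omega) (by omega) (by omega)


end Cycle

section Replace
open SimpleGraph Walk
variable {V : Type*} {G : SimpleGraph V}

/-- transport a closed walk along an equality of basepoints. -/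
def recast {a b : V} (h : a = b) (p : G.Walk a a) : G.Walk b b := h ▸ p

lemma recast_length {a b : V} (h : a = b) (p : G.Walk a a) :
    (recast h p).length = p.length := by subst h; rfl

lemma recast_support {a b : V} (h : a = b) (p : G.Walk a a) :
    (recast h p).support = p.support := by subst h; rfl

lemma recast_isCycle {a b : V} (h : a = b) (p : G.Walk a a) :
    (recast h p).IsCycle ↔ p.IsCycle := by subst h; rfl

lemma recast_hasChord {a b : V} (h : a = b) (p : G.Walk a a) :
    HasChord G (recast h p) ↔ HasChord G p := by subst h; rfl

variable {r : ℕ}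

/-- replace the `i`-th basepoint. -/
def rv (v : Fin r → V) (i : Fin r) (z : V) : Fin r → V := fun j => if j = i then z else v j

/-- replace the `i`-th walk in a family of closed walks. -/
def rwalk [DecidableEq V] {v : Fin r → V} (c : ∀ j, G.Walk (v j) (v j)) (i : Fin r) {z : V}
    (D : G.Walk z z) : ∀ j, G.Walk (rv v i z j) (rv v i z j) :=
  fun j =>
    if h : j = i then recast (show z = rv v i z j from (if_pos h).symm) D
    else recast (show v j = rv v i z j from (if_neg h).symm) (c j)

variable [DecidableEq V] {v : Fin r → V} {c : ∀ j, G.Walk (v j) (v j)} {i : Fin r} {z : V}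
  {D : G.Walk z z}

lemma rwalk_length (j : Fin r) :
    (rwalk c i D j).length = if j = i then D.length else (c j).length := by
  by_cases h : j = i
  · rw [rwalk, dif_pos h, recast_length, if_pos h]
  · rw [rwalk, dif_neg h, recast_length, if_neg h]

lemma rwalk_support (j : Fin r) :
    (rwalk c i D j).support = if j = i then D.support else (c j).support := by
  by_cases h : j = i
  · rw [rwalk, dif_pos h, recast_support, if_pos h]
  · rw [rwalk, dif_neg h, recast_support, if_neg h]

lemma rwalk_isCycle (j : Fin r) :
    (rwalk c i D j).IsCycle ↔ if j = i then D.IsCycle else (c j).IsCycle := by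
  by_cases h : j = i
  · rw [rwalk, dif_pos h, recast_isCycle, if_pos h]
  · rw [rwalk, dif_neg h, recast_isCycle, if_neg h]

lemma rwalk_hasChord (j : Fin r) :
    HasChord G (rwalk c i D j) ↔ if j = i then HasChord G D else HasChord G (c j) := by
  by_cases h : j = i
  · rw [rwalk, dif_pos h, recast_hasChord, if_pos h]
  · rw [rwalk, dif_neg h, recast_hasChord, if_neg h]

end Replace

end ChordAux

open ChordAux

set_option maxHeartbeats 1000000 in
/-- In a minimal set of r vertex-disjoint chorded cycles, any cycle of
length at least 7 has at most two chords, and if it has two chords they cross. -/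
theorem stmt_7 {V : Type*} [DecidableEq V] (G : SimpleGraph V) (r : ℕ)
    (v : Fin r → V) (c : ∀ i, G.Walk (v i) (v i))
    (hcyc : ∀ i, (c i).IsCycle ∧ HasChord G (c i))
    (hdisj : ∀ i j, i ≠ j → ∀ x, x ∈ (c i).support → x ∉ (c j).support)
    (hmin : ∀ (w : Fin r → V) (d : ∀ i, G.Walk (w i) (w i)),
      (∀ i, (d i).IsCycle ∧ HasChord G (d i)) →
      (∀ i j, i ≠ j → ∀ x, x ∈ (d i).support → x ∉ (d j).support) →
      ∑ i, (c i).length ≤ ∑ i, (d i).length)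
    (i : Fin r) (hlen : 7 ≤ (c i).length) :
    {e : Sym2 V | e ∈ G.edgeSet ∧ (∀ x ∈ e, x ∈ (c i).support) ∧ e ∉ (c i).edges}.ncard ≤ 2 ∧
    ∀ e₁ ∈ {e : Sym2 V | e ∈ G.edgeSet ∧ (∀ x ∈ e, x ∈ (c i).support) ∧ e ∉ (c i).edges},
      ∀ e₂ ∈ {e : Sym2 V | e ∈ G.edgeSet ∧ (∀ x ∈ e, x ∈ (c i).support) ∧ e ∉ (c i).edges},
        e₁ ≠ e₂ → Crossing (c i) e₁ e₂ := by
  classical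
  obtain ⟨hcyc_i, -⟩ := hcyc i
  -- minimality: there is no shorter chorded cycle on the vertices of `c i`
  have master : ¬ ∃ (z : V) (D : G.Walk z z), D.IsCycle ∧ HasChord G D ∧
      (∀ t ∈ D.support, t ∈ (c i).support) ∧ D.length < (c i).length := by
    rintro ⟨z, D, hD1, hD2, hD3, hD4⟩
    have h1 : ∀ j, (rwalk c i D j).IsCycle ∧ HasChord G (rwalk c i D j) := by
      intro j
      rw [rwalk_isCycle, rwalk_hasChord]
      by_cases h : j = i
      · rw [if_pos h, if_pos h]
        exact ⟨hD1, hD2⟩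
      · rw [if_neg h, if_neg h]
        exact hcyc j
    have h2 : ∀ j k, j ≠ k → ∀ x, x ∈ (rwalk c i D j).support →
        x ∉ (rwalk c i D k).support := by
      intro j k hjk x hxj hxk
      rw [rwalk_support] at hxj hxk
      by_cases hj : j = i
      · rw [if_pos hj] at hxj
        have hki : k ≠ i := fun h => hjk (hj.trans h.symm)
        rw [if_neg hki] at hxk
        exact hdisj i k (fun h => hki h.symm) x (hD3 x hxj) hxk
      · rw [if_neg hj] at hxj
        by_cases hk : k = i
        · rw [if_pos hk] at hxk
          exact hdisj j i hj x hxj (hD3 x hxk)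
        · rw [if_neg hk] at hxk
          exact hdisj j k hjk x hxj hxk
    have hle := hmin (rv v i z) (rwalk c i D) h1 h2
    have hsum : ∑ j, (rwalk c i D j).length < ∑ j, (c j).length := by
      rw [← Finset.add_sum_erase _ (fun j => (rwalk c i D j).length) (Finset.mem_univ i),
        ← Finset.add_sum_erase _ (fun j => (c j).length) (Finset.mem_univ i)]
      have he : ∑ j ∈ Finset.univ.erase i, (rwalk c i D j).length
          = ∑ j ∈ Finset.univ.erase i, (c j).length := by
        refine Finset.sum_congr rfl fun j hj => ?_
        rw [rwalk_length, if_neg (Finset.ne_of_mem_erase hj)]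
      rw [he, rwalk_length, if_pos rfl]
      omega
    omega
  have cross : ∀ e₁ ∈ {e : Sym2 V | e ∈ G.edgeSet ∧ (∀ x ∈ e, x ∈ (c i).support) ∧
      e ∉ (c i).edges},
      ∀ e₂ ∈ {e : Sym2 V | e ∈ G.edgeSet ∧ (∀ x ∈ e, x ∈ (c i).support) ∧ e ∉ (c i).edges},
      e₁ ≠ e₂ → Crossing (c i) e₁ e₂ := by
    intro e₁ h₁ e₂ h₂ hne
    by_contra hncr
    obtain ⟨a1, b1, E1, adj1, ma1, mb1, s1⟩ := chord_sorted hcyc_i h₁.1 h₁.2.1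
    obtain ⟨a2, b2, E2, adj2, ma2, mb2, s2⟩ := chord_sorted hcyc_i h₂.1 h₂.2.1
    subst E1; subst E2
    exact master (noncross_core hcyc_i ma1 mb1 ma2 mb2 adj1 adj2 h₁.2.2 h₂.2.2 hne s1 s2 hncr)
  refine ⟨?_, cross⟩
  by_contra hcard
  push_neg at hcard
  obtain ⟨T, hTS, hT3⟩ := Set.exists_subset_card_eq (show 3 ≤ _ from hcard)
  obtain ⟨e₁, e₂, e₃, hne12, hne13, hne23, rfl⟩ := Set.ncard_eq_three.1 hT3
  have m1 := hTS (show e₁ ∈ ({e₁, e₂, e₃} : Set (Sym2 V)) by simp)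
  have m2 := hTS (show e₂ ∈ ({e₁, e₂, e₃} : Set (Sym2 V)) by simp)
  have m3 := hTS (show e₃ ∈ ({e₁, e₂, e₃} : Set (Sym2 V)) by simp)
  exact master (three_crossing_shorter hcyc_i hlen m1.1 m1.2.1 m1.2.2 m2.1 m2.2.1 m2.2.2
    m3.1 m3.2.1 m3.2.2 hne12 hne13 hne23
    (cross _ m1 _ m2 hne12) (cross _ m1 _ m3 hne13) (cross _ m2 _ m3 hne23))
end

section
/- Let C₁, ..., C_r be a set of r vertex-disjoint chorded cycles in a graph G minimizing the total number of vertices used, and let x be a vertex of G outside all the cycles. Then x has at most 4 neighbors in each C_i; moreover, if x has exactly 4 neighbors in some C_i then |C_i| = 4, and if x has exactly 3 neighbors in some C_i then |C_i| ≤ 6. -/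
open List

namespace StmtAux

open SimpleGraph Walk

variable {V : Type*} {G : SimpleGraph V}

lemma hasChord_copy {u u' : V} (p : G.Walk u u) (h : u = u') :
    HasChord G (p.copy h h) ↔ HasChord G p := by
  unfold HasChord
  simp only [Walk.support_copy, Walk.edges_copy]

lemma mem_of_getLast?_aux {α : Type*} {l : List α} {a : α} (h : l.getLast? = some a) : a ∈ l := by
  cases l with
  | nil => simp at h
  | cons b t =>
    rw [List.getLast?_eq_getLast (by simp)] at h
    have := List.getLast_mem (l := b :: t) (by simp)
    rwa [Option.some_inj.mp h] at this

section TakeUntil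
variable [DecidableEq V]

lemma support_eq_take_append {u v w : V} (p : G.Walk v w) (h : u ∈ p.support) :
    p.support = (p.takeUntil u h).support ++ (p.dropUntil u h).support.tail := by
  conv_lhs => rw [← p.take_spec h]
  rw [support_append]

lemma length_takeUntil_add {u v w : V} (p : G.Walk v w) (h : u ∈ p.support) :
    (p.takeUntil u h).length + (p.dropUntil u h).length = p.length := by
  conv_rhs => rw [← p.take_spec h]
  rw [Walk.length_append]

lemma support_takeUntil_eq {u v w : V} (p : G.Walk v w) (h : u ∈ p.support) :
    (p.takeUntil u h).support = p.support.take ((p.takeUntil u h).length + 1) := by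
  rw [support_eq_take_append p h, List.take_left']
  rw [length_support]

lemma tail_support_dropUntil_eq {u v w : V} (p : G.Walk v w) (h : u ∈ p.support) :
    (p.dropUntil u h).support.tail = p.support.drop ((p.takeUntil u h).length + 1) := by
  rw [support_eq_take_append p h, List.drop_left']
  rw [length_support]

lemma getElem_length_takeUntil {u v w : V} (p : G.Walk v w) (h : u ∈ p.support)
    (hlt : (p.takeUntil u h).length < p.support.length) :
    p.support[(p.takeUntil u h).length] = u := by
  have h1 : (p.takeUntil u h).support.getLast? = some u := by
    rw [List.getLast?_eq_getLast (support_ne_nil _), getLast_support]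
  rw [support_takeUntil_eq, List.take_succ, List.getElem?_eq_getElem hlt,
    Option.toList_some, List.getLast?_concat] at h1
  exact (Option.some.injEq _ _ ▸ h1)

lemma support_dropUntil_eq {u v w : V} (p : G.Walk v w) (h : u ∈ p.support)
    (hlt : (p.takeUntil u h).length < p.support.length) :
    (p.dropUntil u h).support = p.support.drop ((p.takeUntil u h).length) := by
  rw [List.drop_eq_getElem_cons hlt, getElem_length_takeUntil p h hlt,
    ← tail_support_dropUntil_eq, ← support_eq_cons]

/-- mem of rotate support -/
lemma mem_support_closed_iff {u : V} (w : G.Walk u u) (hw : w.length ≠ 0) (z : V) :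
    z ∈ w.support ↔ z ∈ w.support.tail := by
  have htne : w.support.tail ≠ [] := by
    intro hE
    have h2 := w.length_support
    rw [w.support_eq_cons, hE] at h2
    simp only [List.length_cons, List.length_nil] at h2
    exact hw (by omega)
  have hu : u ∈ w.support.tail := by
    have h1 : w.support.getLast? = some u := by
      rw [List.getLast?_eq_getLast (support_ne_nil _), getLast_support]
    rw [w.support_eq_cons] at h1
    cases hE : w.support.tail with
    | nil => exact absurd hE htne
    | cons b t' =>
      rw [hE, List.getLast?_cons_cons] at h1
      exact mem_of_getLast?_aux h1
  constructor
  · intro hz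
    rw [w.support_eq_cons, List.mem_cons] at hz
    rcases hz with hz | hz
    · rw [hz]; exact hu
    · exact hz
  · intro hz
    rw [w.support_eq_cons]
    exact List.mem_cons_of_mem _ hz

lemma mem_support_rotate_iff {u a : V} (w : G.Walk u u) (hw : w.IsCycle)
    (ha : a ∈ w.support) (z : V) :
    z ∈ (w.rotate a ha).support ↔ z ∈ w.support := by
  have h1 := (Walk.support_rotate w a ha).mem_iff (a := z)
  have hwl : w.length ≠ 0 := by have := hw.three_le_length; omega
  have hrl : (w.rotate a ha).length ≠ 0 := by
    have := (hw.rotate ha).three_le_length; omega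
  rw [mem_support_closed_iff _ hwl, mem_support_closed_iff _ hrl]
  exact h1

lemma length_rotate {u a : V} (w : G.Walk u u) (ha : a ∈ w.support) :
    (w.rotate a ha).length = w.length := by
  have := length_takeUntil_add w ha
  exact Walk.length_rotate w a ha

end TakeUntil
lemma hasChord_copy' {V : Type*} {G : SimpleGraph V} {u u' : V} (p : G.Walk u u) (h : u = u') :
    (∃ a b : V, a ∈ (p.copy h h).support ∧ b ∈ (p.copy h h).support ∧ G.Adj a b ∧
      s(a, b) ∉ (p.copy h h).edges) ↔
    (∃ a b : V, a ∈ p.support ∧ b ∈ p.support ∧ G.Adj a b ∧ s(a, b) ∉ p.edges) := by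
  simp only [Walk.support_copy, Walk.edges_copy]


lemma aux_M {V : Type*} (G : SimpleGraph V) (r : ℕ)
    (v : Fin r → V) (c : ∀ i, G.Walk (v i) (v i))
    (hcyc : ∀ i, (c i).IsCycle ∧ HasChord G (c i))
    (hdisj : ∀ i j, i ≠ j → ∀ x, x ∈ (c i).support → x ∉ (c j).support)
    (hmin : ∀ (w : Fin r → V) (d : ∀ i, G.Walk (w i) (w i)),
      (∀ i, (d i).IsCycle ∧ HasChord G (d i)) →
      (∀ i j, i ≠ j → ∀ x, x ∈ (d i).support → x ∉ (d j).support) →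
      ∑ i, (c i).length ≤ ∑ i, (d i).length)
    (x : V) (hx : ∀ i, x ∉ (c i).support) (i : Fin r)
    {a z m : V} (Q : G.Walk a z) (hQn : Q.support.Nodup)
    (hQs : ∀ y ∈ Q.support, y ∈ (c i).support)
    (hxa : G.Adj x a) (hxz : G.Adj x z) (haz : a ≠ z)
    (hm : m ∈ Q.support) (hma : m ≠ a) (hmz : m ≠ z) (hxm : G.Adj x m) :
    (c i).length ≤ Q.length + 2 := by
  classical
  have hxQ : x ∉ Q.support := fun h => hx i (hQs x h)
  set P : G.Walk a x := Q.append (Walk.cons hxz.symm Walk.nil) with hP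
  have hPsup : P.support = Q.support ++ [x] := by
    rw [hP, support_append]
    simp
  have hPedges : P.edges = Q.edges ++ [s(z, x)] := by
    rw [hP, edges_append]
    simp
  have hPpath : P.IsPath := by
    apply IsPath.mk'
    rw [hPsup]
    rw [List.nodup_append']
    exact ⟨hQn, List.nodup_singleton x, fun y hy hy2 => by
      simp at hy2; subst hy2; exact hxQ hy⟩
  set D : G.Walk x x := Walk.cons hxa P with hD
  have hxne : ∀ y ∈ Q.support, x ≠ y := fun y hy he => hxQ (he ▸ hy)
  have hDcyc : D.IsCycle := by
    rw [hD, Walk.cons_isCycle_iff]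
    refine ⟨hPpath, ?_⟩
    rw [hPedges, List.mem_append]
    rintro (h | h)
    · exact hxQ (Walk.fst_mem_support_of_mem_edges Q h)
    · simp only [List.mem_singleton, Sym2.eq_iff] at h
      rcases h with ⟨h1, h2⟩ | ⟨h1, h2⟩
      · exact hxne z Q.end_mem_support h1
      · exact haz h2
  have hDsup : D.support = x :: (Q.support ++ [x]) := by
    rw [hD, support_cons, hPsup]
  have hDedges : D.edges = s(x, a) :: (Q.edges ++ [s(z, x)]) := by
    rw [hD, edges_cons, hPedges]
  have hDchord : HasChord G D := by
    refine ⟨x, m, Walk.start_mem_support _, ?_, hxm, ?_⟩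
    · rw [hDsup]
      exact List.mem_cons_of_mem _ (List.mem_append_left _ hm)
    · rw [hDedges]
      intro hmem
      rcases List.mem_cons.mp hmem with h | h
      · rw [Sym2.eq_iff] at h
        rcases h with ⟨h1, h2⟩ | ⟨h1, h2⟩
        · exact hma h2
        · exact hxne m hm h2.symm
      · rcases List.mem_append.mp h with h | h
        · exact hxQ (Walk.fst_mem_support_of_mem_edges Q h)
        · simp only [List.mem_singleton, Sym2.eq_iff] at h
          rcases h with ⟨h1, h2⟩ | ⟨h1, h2⟩
          · exact hxne z Q.end_mem_support h1
          · exact hmz h2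
  have hDsub : ∀ y ∈ D.support, y = x ∨ y ∈ (c i).support := by
    intro y hy
    rw [hDsup] at hy
    rcases List.mem_cons.mp hy with h | h
    · exact Or.inl h
    · rcases List.mem_append.mp h with h | h
      · exact Or.inr (hQs y h)
      · simp at h; exact Or.inl h
  -- the new family
  set w' : Fin r → V := fun j => if j = i then x else v j with hw'
  have hwj : ∀ j (h : j = i), w' j = x := fun j h => by simp [hw', h]
  have hwj' : ∀ j (h : ¬ j = i), w' j = v j := fun j h => by simp [hw', h]
  set d : ∀ j, G.Walk (w' j) (w' j) := fun j =>
    if h : j = i then D.copy (hwj j h).symm (hwj j h).symm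
    else (c j).copy (hwj' j h).symm (hwj' j h).symm with hd
  have hdi : ∀ j (h : j = i), (d j).support = D.support ∧ (d j).length = D.length := by
    intro j h
    simp [hd, h]
  have hdj : ∀ j (h : ¬ j = i), (d j).support = (c j).support ∧ (d j).length = (c j).length := by
    intro j h
    simp [hd, h]
  have hdcyc : ∀ j, (d j).IsCycle ∧ HasChord G (d j) := by
    intro j
    by_cases h : j = i
    · refine ⟨?_, ?_⟩ <;> simp only [hd, dif_pos h]
      · rw [Walk.isCycle_copy]
        exact hDcyc
      · exact (hasChord_copy' D _).mpr hDchord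
    · refine ⟨?_, ?_⟩ <;> simp only [hd, dif_neg h]
      · rw [Walk.isCycle_copy]
        exact (hcyc j).1
      · exact (hasChord_copy' (c j) _).mpr (hcyc j).2
  have hddisj : ∀ j k, j ≠ k → ∀ y, y ∈ (d j).support → y ∉ (d k).support := by
    intro j k hjk y hyj hyk
    by_cases h1 : j = i <;> by_cases h2 : k = i
    · exact hjk (h1.trans h2.symm)
    · rw [(hdi j h1).1] at hyj
      rw [(hdj k h2).1] at hyk
      rcases hDsub y hyj with rfl | hmem
      · exact hx k hyk
      · subst h1
        exact hdisj j k hjk y hmem hyk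
    · rw [(hdj j h1).1] at hyj
      rw [(hdi k h2).1] at hyk
      rcases hDsub y hyk with rfl | hmem
      · exact hx j hyj
      · subst h2
        exact hdisj j k hjk y hyj hmem
    · rw [(hdj j h1).1] at hyj
      rw [(hdj k h2).1] at hyk
      exact hdisj j k hjk y hyj hyk
  have hsum := hmin w' d hdcyc hddisj
  have hsumd : ∑ j, (d j).length = D.length + ∑ j ∈ Finset.univ \ {i}, (c j).length := by
    rw [show (fun j => (d j).length) = Function.update (fun j => (c j).length) i D.length by
      funext j
      by_cases h : j = i
      · subst h
        rw [Function.update_self, (hdi j rfl).2]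
      · rw [Function.update_of_ne h, (hdj j h).2]]
    exact Finset.sum_update_of_mem (Finset.mem_univ i) _ _
  have hsumc : ∑ j, (c j).length = (c i).length + ∑ j ∈ Finset.univ \ {i}, (c j).length :=
    Finset.sum_eq_add_sum_sdiff_singleton_of_mem (Finset.mem_univ i) _
  have hDlen : D.length = Q.length + 2 := by
    rw [hD, Walk.length_cons, hP, Walk.length_append, Walk.length_cons, Walk.length_nil]
  omega


lemma aux_main {V : Type*} (G : SimpleGraph V) (r : ℕ)
    (v : Fin r → V) (c : ∀ i, G.Walk (v i) (v i))
    (hcyc : ∀ i, (c i).IsCycle ∧ HasChord G (c i))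
    (hdisj : ∀ i j, i ≠ j → ∀ x, x ∈ (c i).support → x ∉ (c j).support)
    (hmin : ∀ (w : Fin r → V) (d : ∀ i, G.Walk (w i) (w i)),
      (∀ i, (d i).IsCycle ∧ HasChord G (d i)) →
      (∀ i j, i ≠ j → ∀ x, x ∈ (d i).support → x ∉ (d j).support) →
      ∑ i, (c i).length ≤ ∑ i, (d i).length)
    (x : V) (hx : ∀ i, x ∉ (c i).support) (i : Fin r)
    {a : V} (ha : a ∈ (c i).support) (hxa : G.Adj x a) :
    ∃ F : V → ℕ,
      (∀ z, z ∈ (c i).support → G.Adj x z → z ≠ a →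
        (1 ≤ F z ∧ F z + 1 ≤ (c i).length)) ∧
      (∀ z m, z ∈ (c i).support → G.Adj x z → z ≠ a →
        m ∈ (c i).support → G.Adj x m → m ≠ a →
        (F z = F m → z = m) ∧
        (F z < F m → ((c i).length ≤ F m + 2 ∧ F m ≤ F z + 2 ∧ F z ≤ 2))) := by
  classical
  have hc := (hcyc i).1
  set n := (c i).length with hn
  have hn3 : 3 ≤ n := hc.three_le_length
  set c' := (c i).rotate a ha with hc'def
  have hc'cyc : c'.IsCycle := hc.rotate ha
  have hlen' : c'.length = n := length_rotate _ ha
  have hmemiff : ∀ z, z ∈ c'.support ↔ z ∈ (c i).support :=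
    mem_support_rotate_iff _ hc ha
  set s := c'.support with hs
  have hslen : s.length = n + 1 := by rw [hs, length_support, hlen']
  have htnd : s.tail.Nodup := hc'cyc.support_nodup
  have hhead : s = a :: s.tail := c'.support_eq_cons
  have htlen : s.tail.length = n := by
    have := congrArg List.length hhead
    simp only [List.length_cons] at this
    omega
  have htne : s.tail ≠ [] := by
    intro h; rw [h] at htlen; simp at htlen; omega
  have hgetn : s[n]? = some a := by
    have h1 : s.getLast? = some a := by
      rw [List.getLast?_eq_getLast (support_ne_nil _), getLast_support]
    rw [List.getLast?_eq_getElem?] at h1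
    rw [show n = s.length - 1 by omega]
    exact h1
  have htlast : s.tail.getLast? = some a := by
    have h1 : s.getLast? = some a := by
      rw [List.getLast?_eq_getLast (support_ne_nil _), getLast_support]
    rw [hhead] at h1
    cases hE : s.tail with
    | nil => exact absurd hE htne
    | cons b t' =>
      rw [hE, List.getLast?_cons_cons] at h1
      exact h1
  have hdl : s.dropLast.Nodup := by
    have h2 : s.tail.dropLast ++ [a] = s.tail := by
      have h3 := List.dropLast_append_getLast htne
      rwa [show s.tail.getLast htne = a by
        have := List.getLast?_eq_getLast (l := s.tail) htne
        rw [htlast] at this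
        exact (Option.some_inj.mp this).symm] at h3
    have h4 : (s.tail.dropLast ++ [a]).Nodup := by rw [h2]; exact htnd
    rw [List.nodup_append'] at h4
    have h5 : s.dropLast = a :: s.tail.dropLast := by
      conv_lhs => rw [hhead]
      rw [List.dropLast_cons_of_ne_nil htne]
    rw [h5, List.nodup_cons]
    exact ⟨fun hmem => h4.2.2 hmem (List.mem_singleton_self a), h4.1⟩
  have key : ∀ z (hz' : z ∈ c'.support), z ≠ a →
      1 ≤ (c'.takeUntil z hz').length ∧ (c'.takeUntil z hz').length + 1 ≤ n ∧
        s[(c'.takeUntil z hz').length]? = some z := by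
    intro z hz' hza
    have hle : (c'.takeUntil z hz').length ≤ n := by
      have := c'.length_takeUntil_le hz'
      omega
    have h1 : 1 ≤ (c'.takeUntil z hz').length := by
      by_contra h
      have h0 : (c'.takeUntil z hz').length = 0 := by omega
      exact hza (Walk.eq_of_length_eq_zero h0).symm
    have hq : s[(c'.takeUntil z hz').length]? = some z := by
      rw [List.getElem?_eq_getElem (by rw [hslen]; omega)]
      rw [getElem_length_takeUntil c' hz' (by rw [hslen]; omega)]
    have hne : (c'.takeUntil z hz').length ≠ n := by
      intro h
      rw [h, hgetn] at hq
      exact hza (Option.some_inj.mp hq).symm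
    exact ⟨h1, by omega, hq⟩
  have pair : ∀ z m (hz' : z ∈ c'.support) (hm' : m ∈ c'.support), z ≠ a → m ≠ a →
      G.Adj x z → G.Adj x m →
      (c'.takeUntil z hz').length < (c'.takeUntil m hm').length →
      n ≤ (c'.takeUntil m hm').length + 2 ∧
      (c'.takeUntil m hm').length ≤ (c'.takeUntil z hz').length + 2 ∧
      (c'.takeUntil z hz').length ≤ 2 := by
    intro z m hz' hm' hza hma hxz hxm hlt
    set Fz := (c'.takeUntil z hz').length with hFz
    set Fm := (c'.takeUntil m hm').length with hFm
    obtain ⟨hz1, hzn, hzq⟩ := key z hz' hza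
    obtain ⟨hm1, hmn, hmq⟩ := key m hm' hma
    have hzm : z ≠ m := by
      intro h
      subst h
      have hEq : Fz = Fm := rfl
      omega
    have hsubmem : ∀ y, y ∈ c'.support → y ∈ (c i).support := fun y hy => (hmemiff y).mp hy
    have hB : n ≤ Fm + 2 := by
      have hsup1 : (c'.takeUntil m hm').support = s.take (Fm + 1) :=
        support_takeUntil_eq c' hm'
      have hmemz : z ∈ (c'.takeUntil m hm').support := by
        rw [hsup1]
        apply List.mem_of_getElem? (i := Fz)
        rw [List.getElem?_take]
        rw [if_pos (by omega)]
        exact hzq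
      have hnd : (c'.takeUntil m hm').support.Nodup := by
        rw [hsup1]
        have he : s.take (Fm + 1) = s.dropLast.take (Fm + 1) := by
          rw [List.dropLast_eq_take, List.take_take]
          congr 1
          omega
        rw [he]
        exact hdl.sublist (List.take_sublist _ _)
      have := aux_M G r v c hcyc hdisj hmin x hx i (c'.takeUntil m hm') hnd
        (fun y hy => hsubmem y (c'.support_takeUntil_subset hm' hy))
        hxa hxm (fun h => hma h.symm) hmemz hza hzm hxz
      omega
    have hdroplen : Fz + (c'.dropUntil z hz').length = n := by
      have := length_takeUntil_add c' hz'
      omega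
    have hA : Fz ≤ 2 := by
      set Q2 := (c'.dropUntil z hz').reverse with hQ2
      have hQ2len : Q2.length = (c'.dropUntil z hz').length := Walk.length_reverse _
      have hdsup : (c'.dropUntil z hz').support = s.drop Fz :=
        support_dropUntil_eq c' hz' (by rw [hslen]; omega)
      have hmemm : m ∈ Q2.support := by
        rw [hQ2, Walk.support_reverse, List.mem_reverse, hdsup]
        apply List.mem_of_getElem? (i := Fm - Fz)
        rw [List.getElem?_drop]
        rw [show Fz + (Fm - Fz) = Fm by omega]
        exact hmq
      have hnd : Q2.support.Nodup := by
        rw [hQ2, Walk.support_reverse, List.nodup_reverse, hdsup]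
        have he : s.drop Fz = s.tail.drop (Fz - 1) := by
          conv_lhs => rw [hhead, show Fz = (Fz - 1) + 1 from by omega]
          rw [List.drop_succ_cons]
        rw [he]
        exact htnd.sublist (List.drop_sublist _ _)
      have hsub : ∀ y ∈ Q2.support, y ∈ (c i).support := by
        intro y hy
        rw [hQ2, Walk.support_reverse, List.mem_reverse] at hy
        exact hsubmem y (c'.support_dropUntil_subset hz' hy)
      have := aux_M G r v c hcyc hdisj hmin x hx i Q2 hnd hsub
        hxa hxz (fun h => hza h.symm) hmemm (fun h => hma h) (fun h => hzm h.symm) hxm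
      omega
    have hdroplenm : Fm + (c'.dropUntil m hm').length = n := by
      have := length_takeUntil_add c' hm'
      omega
    have hC : Fm ≤ Fz + 2 := by
      set Q3 := (c'.dropUntil m hm').append (c'.takeUntil z hz') with hQ3
      have hQ3len : Q3.length = (c'.dropUntil m hm').length + Fz := Walk.length_append _ _
      have hdsup : (c'.dropUntil m hm').support = s.drop Fm :=
        support_dropUntil_eq c' hm' (by rw [hslen]; omega)
      have htsup : (c'.takeUntil z hz').support.tail = s.tail.take Fz := by
        have h1 : (c'.takeUntil z hz').support = s.take (Fz + 1) :=
          support_takeUntil_eq c' hz'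
        rw [h1]
        conv_lhs => rw [hhead]
        rw [List.take_succ_cons]
        rfl
      have hQ3sup : Q3.support = s.drop Fm ++ s.tail.take Fz := by
        rw [hQ3, Walk.support_append, hdsup, htsup]
      have hmema : a ∈ Q3.support := by
        rw [hQ3sup]
        apply List.mem_append_left
        apply List.mem_of_getElem? (i := n - Fm)
        rw [List.getElem?_drop]
        rw [show Fm + (n - Fm) = n by omega]
        exact hgetn
      have hdisjt : List.Disjoint (s.tail.take Fz) (s.tail.drop Fz) := by
        have h1 : s.tail.take Fz ++ s.tail.drop Fz = s.tail := List.take_append_drop _ _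
        have h2 : (s.tail.take Fz ++ s.tail.drop Fz).Nodup := by rw [h1]; exact htnd
        exact (List.nodup_append'.mp h2).2.2
      have hdropsub : s.drop Fm <+ s.tail.drop Fz := by
        have he : s.drop Fm = s.tail.drop (Fm - 1) := by
          conv_lhs => rw [hhead, show Fm = (Fm - 1) + 1 from by omega]
          rw [List.drop_succ_cons]
        rw [he, show Fm - 1 = Fz + (Fm - 1 - Fz) by omega, ← List.drop_drop]
        exact List.drop_sublist _ _
      have hnd : Q3.support.Nodup := by
        rw [hQ3sup, List.nodup_append']
        refine ⟨?_, ?_, ?_⟩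
        · have he : s.drop Fm = s.tail.drop (Fm - 1) := by
            conv_lhs => rw [hhead, show Fm = (Fm - 1) + 1 from by omega]
            rw [List.drop_succ_cons]
          rw [he]
          exact htnd.sublist (List.drop_sublist _ _)
        · exact htnd.sublist (List.take_sublist _ _)
        · intro y hy1 hy2
          exact hdisjt hy2 (hdropsub.mem hy1)
      have hsub : ∀ y ∈ Q3.support, y ∈ (c i).support := by
        intro y hy
        rw [hQ3sup, List.mem_append] at hy
        apply hsubmem
        rcases hy with hy | hy
        · exact (List.drop_sublist _ _).mem hy
        · exact List.mem_of_mem_tail ((List.take_sublist _ _).mem hy)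
      have := aux_M G r v c hcyc hdisj hmin x hx i Q3 hnd hsub
        hxm hxz hzm.symm hmema hma.symm hza.symm hxa
      omega
    exact ⟨hB, hC, hA⟩
  refine ⟨fun z => if hz : z ∈ c'.support then (c'.takeUntil z hz).length else 0, ?_, ?_⟩
  · intro z hzc hxz hza
    have hz' : z ∈ c'.support := (hmemiff z).mpr hzc
    dsimp only
    rw [dif_pos hz']
    obtain ⟨h1, h2, _⟩ := key z hz' hza
    exact ⟨h1, h2⟩
  · intro z m hzc hxz hza hmc hxm hma
    have hz' : z ∈ c'.support := (hmemiff z).mpr hzc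
    have hm' : m ∈ c'.support := (hmemiff m).mpr hmc
    dsimp only
    rw [dif_pos hz', dif_pos hm']
    obtain ⟨_, _, hzq⟩ := key z hz' hza
    obtain ⟨_, _, hmq⟩ := key m hm' hma
    constructor
    · intro h
      rw [h, hmq] at hzq
      exact (Option.some_inj.mp hzq).symm
    · intro hlt
      exact pair z m hz' hm' hza hma hxz hxm hlt

end StmtAux

open StmtAux in
set_option maxHeartbeats 1000000 in
/-- In a minimal set of r vertex-disjoint chorded cycles, any outside
vertex x has at most 4 neighbors in each cycle; 4 neighbors forces a 4-cycle and
3 neighbors forces a cycle of length at most 6. -/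
theorem stmt_8 {V : Type*} (G : SimpleGraph V) (r : ℕ)
    (v : Fin r → V) (c : ∀ i, G.Walk (v i) (v i))
    (hcyc : ∀ i, (c i).IsCycle ∧ HasChord G (c i))
    (hdisj : ∀ i j, i ≠ j → ∀ x, x ∈ (c i).support → x ∉ (c j).support)
    (hmin : ∀ (w : Fin r → V) (d : ∀ i, G.Walk (w i) (w i)),
      (∀ i, (d i).IsCycle ∧ HasChord G (d i)) →
      (∀ i j, i ≠ j → ∀ x, x ∈ (d i).support → x ∉ (d j).support) →
      ∑ i, (c i).length ≤ ∑ i, (d i).length)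
    (x : V) (hx : ∀ i, x ∉ (c i).support) :
    ∀ i : Fin r,
      {y : V | y ∈ (c i).support ∧ G.Adj x y}.ncard ≤ 4 ∧
      ({y : V | y ∈ (c i).support ∧ G.Adj x y}.ncard = 4 → (c i).length = 4) ∧
      ({y : V | y ∈ (c i).support ∧ G.Adj x y}.ncard = 3 → (c i).length ≤ 6) := by
  intro i
  classical
  have hc := (hcyc i).1
  have hn3 : 3 ≤ (c i).length := hc.three_le_length
  have hfin : {y : V | y ∈ (c i).support ∧ G.Adj x y}.Finite :=
    Set.Finite.subset (c i).support.finite_toSet (fun y hy => hy.1)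
  set T := hfin.toFinset with hT
  have hncard : {y : V | y ∈ (c i).support ∧ G.Adj x y}.ncard = T.card :=
    Set.ncard_eq_toFinset_card _ hfin
  have hmemT : ∀ y, y ∈ T ↔ (y ∈ (c i).support ∧ G.Adj x y) := by
    intro y
    rw [hT, Set.Finite.mem_toFinset]
    rfl
  have peel : ∀ (t : Finset V) (k : ℕ), k + 1 ≤ t.card → ∃ y ∈ t, k ≤ (t.erase y).card := by
    intro t k h
    have hpos : 0 < t.card := by omega
    obtain ⟨y, hy⟩ := Finset.card_pos.mp hpos
    exact ⟨y, hy, by rw [Finset.card_erase_of_mem hy]; omega⟩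
  refine ⟨?_, ?_, ?_⟩
  · by_contra hcon
    rw [hncard] at hcon
    have h5 : 5 ≤ T.card := by omega
    obtain ⟨a, haT, h4⟩ := peel T 4 h5
    obtain ⟨z1, hz1E, h3⟩ := peel _ 3 h4
    obtain ⟨z2, hz2E, h2⟩ := peel _ 2 h3
    obtain ⟨z3, hz3E, h1⟩ := peel _ 1 h2
    obtain ⟨z4, hz4E, h0⟩ := peel _ 0 h1
    clear h4 h3 h2 h1 h0
    simp only [Finset.mem_erase] at hz1E hz2E hz3E hz4E
    obtain ⟨hne1a, hz1T⟩ := hz1E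
    obtain ⟨hne21, hne2a, hz2T⟩ := hz2E
    obtain ⟨hne32, hne31, hne3a, hz3T⟩ := hz3E
    obtain ⟨hne43, hne42, hne41, hne4a, hz4T⟩ := hz4E
    obtain ⟨hac, hxac⟩ := (hmemT a).mp haT
    obtain ⟨hc1, hx1⟩ := (hmemT z1).mp hz1T
    obtain ⟨hc2, hx2⟩ := (hmemT z2).mp hz2T
    obtain ⟨hc3, hx3⟩ := (hmemT z3).mp hz3T
    obtain ⟨hc4, hx4⟩ := (hmemT z4).mp hz4T
    obtain ⟨F, hFb, hFp⟩ := aux_main G r v c hcyc hdisj hmin x hx i hac hxac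
    obtain ⟨hb1, hb1'⟩ := hFb z1 hc1 hx1 hne1a
    obtain ⟨hb2, hb2'⟩ := hFb z2 hc2 hx2 hne2a
    obtain ⟨hb3, hb3'⟩ := hFb z3 hc3 hx3 hne3a
    obtain ⟨hb4, hb4'⟩ := hFb z4 hc4 hx4 hne4a
    have hP12 := hFp z1 z2 hc1 hx1 hne1a hc2 hx2 hne2a
    have hP21 := hFp z2 z1 hc2 hx2 hne2a hc1 hx1 hne1a
    have hne'12 : F z1 ≠ F z2 := fun h => hne21 (hP12.1 h).symm
    have hR12 : F z1 ≤ F z2 + 2 ∧ F z2 ≤ F z1 + 2 := by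
      rcases Nat.lt_trichotomy (F z1) (F z2) with h | h | h
      · have h2 := (hP12.2 h).2.1
        omega
      · exact absurd h hne'12
      · have h2 := (hP21.2 h).2.1
        omega
    clear hP12 hP21
    have hP13 := hFp z1 z3 hc1 hx1 hne1a hc3 hx3 hne3a
    have hP31 := hFp z3 z1 hc3 hx3 hne3a hc1 hx1 hne1a
    have hne'13 : F z1 ≠ F z3 := fun h => hne31 (hP13.1 h).symm
    have hR13 : F z1 ≤ F z3 + 2 ∧ F z3 ≤ F z1 + 2 := by
      rcases Nat.lt_trichotomy (F z1) (F z3) with h | h | h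
      · have h2 := (hP13.2 h).2.1
        omega
      · exact absurd h hne'13
      · have h2 := (hP31.2 h).2.1
        omega
    clear hP13 hP31
    have hP14 := hFp z1 z4 hc1 hx1 hne1a hc4 hx4 hne4a
    have hP41 := hFp z4 z1 hc4 hx4 hne4a hc1 hx1 hne1a
    have hne'14 : F z1 ≠ F z4 := fun h => hne41 (hP14.1 h).symm
    have hR14 : F z1 ≤ F z4 + 2 ∧ F z4 ≤ F z1 + 2 := by
      rcases Nat.lt_trichotomy (F z1) (F z4) with h | h | h
      · have h2 := (hP14.2 h).2.1
        omega
      · exact absurd h hne'14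
      · have h2 := (hP41.2 h).2.1
        omega
    clear hP14 hP41
    have hP23 := hFp z2 z3 hc2 hx2 hne2a hc3 hx3 hne3a
    have hP32 := hFp z3 z2 hc3 hx3 hne3a hc2 hx2 hne2a
    have hne'23 : F z2 ≠ F z3 := fun h => hne32 (hP23.1 h).symm
    have hR23 : F z2 ≤ F z3 + 2 ∧ F z3 ≤ F z2 + 2 := by
      rcases Nat.lt_trichotomy (F z2) (F z3) with h | h | h
      · have h2 := (hP23.2 h).2.1
        omega
      · exact absurd h hne'23
      · have h2 := (hP32.2 h).2.1
        omega
    clear hP23 hP32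
    have hP24 := hFp z2 z4 hc2 hx2 hne2a hc4 hx4 hne4a
    have hP42 := hFp z4 z2 hc4 hx4 hne4a hc2 hx2 hne2a
    have hne'24 : F z2 ≠ F z4 := fun h => hne42 (hP24.1 h).symm
    have hR24 : F z2 ≤ F z4 + 2 ∧ F z4 ≤ F z2 + 2 := by
      rcases Nat.lt_trichotomy (F z2) (F z4) with h | h | h
      · have h2 := (hP24.2 h).2.1
        omega
      · exact absurd h hne'24
      · have h2 := (hP42.2 h).2.1
        omega
    clear hP24 hP42
    have hP34 := hFp z3 z4 hc3 hx3 hne3a hc4 hx4 hne4a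
    have hP43 := hFp z4 z3 hc4 hx4 hne4a hc3 hx3 hne3a
    have hne'34 : F z3 ≠ F z4 := fun h => hne43 (hP34.1 h).symm
    have hR34 : F z3 ≤ F z4 + 2 ∧ F z4 ≤ F z3 + 2 := by
      rcases Nat.lt_trichotomy (F z3) (F z4) with h | h | h
      · have h2 := (hP34.2 h).2.1
        omega
      · exact absurd h hne'34
      · have h2 := (hP43.2 h).2.1
        omega
    clear hP34 hP43
    clear hFp hFb
    omega
  · intro hcard4
    rw [hncard] at hcard4
    have h4 : 4 ≤ T.card := by omega
    obtain ⟨a, haT, h3⟩ := peel T 3 h4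
    obtain ⟨z1, hz1E, h2⟩ := peel _ 2 h3
    obtain ⟨z2, hz2E, h1⟩ := peel _ 1 h2
    obtain ⟨z3, hz3E, h0⟩ := peel _ 0 h1
    clear h3 h2 h1 h0
    simp only [Finset.mem_erase] at hz1E hz2E hz3E
    obtain ⟨hne1a, hz1T⟩ := hz1E
    obtain ⟨hne21, hne2a, hz2T⟩ := hz2E
    obtain ⟨hne32, hne31, hne3a, hz3T⟩ := hz3E
    obtain ⟨hac, hxac⟩ := (hmemT a).mp haT
    obtain ⟨hc1, hx1⟩ := (hmemT z1).mp hz1T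
    obtain ⟨hc2, hx2⟩ := (hmemT z2).mp hz2T
    obtain ⟨hc3, hx3⟩ := (hmemT z3).mp hz3T
    obtain ⟨F, hFb, hFp⟩ := aux_main G r v c hcyc hdisj hmin x hx i hac hxac
    obtain ⟨hb1, hb1'⟩ := hFb z1 hc1 hx1 hne1a
    obtain ⟨hb2, hb2'⟩ := hFb z2 hc2 hx2 hne2a
    obtain ⟨hb3, hb3'⟩ := hFb z3 hc3 hx3 hne3a
    have hP12 := hFp z1 z2 hc1 hx1 hne1a hc2 hx2 hne2a
    have hP21 := hFp z2 z1 hc2 hx2 hne2a hc1 hx1 hne1a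
    have hne'12 : F z1 ≠ F z2 := fun h => hne21 (hP12.1 h).symm
    have hR12 : (F z1 < F z2 ∧ (c i).length ≤ F z2 + 2 ∧ F z2 ≤ F z1 + 2 ∧ F z1 ≤ 2) ∨
        (F z2 < F z1 ∧ (c i).length ≤ F z1 + 2 ∧ F z1 ≤ F z2 + 2 ∧ F z2 ≤ 2) := by
      rcases Nat.lt_trichotomy (F z1) (F z2) with h | h | h
      · exact Or.inl ⟨h, hP12.2 h⟩
      · exact absurd h hne'12
      · exact Or.inr ⟨h, hP21.2 h⟩
    clear hP12 hP21
    have hP13 := hFp z1 z3 hc1 hx1 hne1a hc3 hx3 hne3a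
    have hP31 := hFp z3 z1 hc3 hx3 hne3a hc1 hx1 hne1a
    have hne'13 : F z1 ≠ F z3 := fun h => hne31 (hP13.1 h).symm
    have hR13 : (F z1 < F z3 ∧ (c i).length ≤ F z3 + 2 ∧ F z3 ≤ F z1 + 2 ∧ F z1 ≤ 2) ∨
        (F z3 < F z1 ∧ (c i).length ≤ F z1 + 2 ∧ F z1 ≤ F z3 + 2 ∧ F z3 ≤ 2) := by
      rcases Nat.lt_trichotomy (F z1) (F z3) with h | h | h
      · exact Or.inl ⟨h, hP13.2 h⟩
      · exact absurd h hne'13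
      · exact Or.inr ⟨h, hP31.2 h⟩
    clear hP13 hP31
    have hP23 := hFp z2 z3 hc2 hx2 hne2a hc3 hx3 hne3a
    have hP32 := hFp z3 z2 hc3 hx3 hne3a hc2 hx2 hne2a
    have hne'23 : F z2 ≠ F z3 := fun h => hne32 (hP23.1 h).symm
    have hR23 : (F z2 < F z3 ∧ (c i).length ≤ F z3 + 2 ∧ F z3 ≤ F z2 + 2 ∧ F z2 ≤ 2) ∨
        (F z3 < F z2 ∧ (c i).length ≤ F z2 + 2 ∧ F z2 ≤ F z3 + 2 ∧ F z3 ≤ 2) := by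
      rcases Nat.lt_trichotomy (F z2) (F z3) with h | h | h
      · exact Or.inl ⟨h, hP23.2 h⟩
      · exact absurd h hne'23
      · exact Or.inr ⟨h, hP32.2 h⟩
    clear hP23 hP32
    clear hFp hFb
    omega
  · intro hcard3
    rw [hncard] at hcard3
    have h3 : 3 ≤ T.card := by omega
    obtain ⟨a, haT, h2⟩ := peel T 2 h3
    obtain ⟨z1, hz1E, h1⟩ := peel _ 1 h2
    obtain ⟨z2, hz2E, h0⟩ := peel _ 0 h1
    clear h2 h1 h0
    simp only [Finset.mem_erase] at hz1E hz2E
    obtain ⟨hne1a, hz1T⟩ := hz1E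
    obtain ⟨hne21, hne2a, hz2T⟩ := hz2E
    obtain ⟨hac, hxac⟩ := (hmemT a).mp haT
    obtain ⟨hc1, hx1⟩ := (hmemT z1).mp hz1T
    obtain ⟨hc2, hx2⟩ := (hmemT z2).mp hz2T
    obtain ⟨F, hFb, hFp⟩ := aux_main G r v c hcyc hdisj hmin x hx i hac hxac
    obtain ⟨hb1, hb1'⟩ := hFb z1 hc1 hx1 hne1a
    obtain ⟨hb2, hb2'⟩ := hFb z2 hc2 hx2 hne2a
    have hP12 := hFp z1 z2 hc1 hx1 hne1a hc2 hx2 hne2a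
    have hP21 := hFp z2 z1 hc2 hx2 hne2a hc1 hx1 hne1a
    have hne'12 : F z1 ≠ F z2 := fun h => hne21 (hP12.1 h).symm
    have hR12 : (F z1 < F z2 ∧ (c i).length ≤ F z2 + 2 ∧ F z2 ≤ F z1 + 2 ∧ F z1 ≤ 2) ∨
        (F z2 < F z1 ∧ (c i).length ≤ F z1 + 2 ∧ F z1 ≤ F z2 + 2 ∧ F z2 ≤ 2) := by
      rcases Nat.lt_trichotomy (F z1) (F z2) with h | h | h
      · exact Or.inl ⟨h, hP12.2 h⟩
      · exact absurd h hne'12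
      · exact Or.inr ⟨h, hP21.2 h⟩
    clear hP12 hP21
    clear hFp hFb
    omega
end

section
/- For all k ≥ 1 and t ≥ 1, the complete bipartite graph K_{3k−1, m} with m ≥ 3k−1 contains no k vertex-disjoint chorded cycles, and σ_t(K_{3k−1,m}) = t(3k−1) when m ≥ t. -/
open SimpleGraph

section Aux

variable {V : Type*} {G : SimpleGraph V}

lemma aux_first_edge_mem {u v : V} (p : G.Walk u v) (hp : ¬ p.Nil) :
    s(u, p.getVert 1) ∈ p.edges := by
  cases p with
  | nil => simp at hp
  | cons h q => simp

lemma aux_mem_tail_support_of_mem {v : V} {p : G.Walk v v} (hp : ¬p.Nil) {x : V}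
    (hx : x ∈ p.support) : x ∈ p.support.tail := by
  rw [← Walk.support_tail_of_not_nil p hp]
  rw [← Walk.cons_support_tail hp] at hx
  rcases List.mem_cons.mp hx with h | h
  · exact h ▸ p.tail.end_mem_support
  · exact h

lemma aux_cycle_two_nbrs {u : V} {c : G.Walk u u} (hc : c.IsCycle) :
    ∃ x y : V, x ≠ y ∧ x ∈ c.support ∧ y ∈ c.support ∧ G.Adj u x ∧ G.Adj u y ∧
      s(u, x) ∈ c.edges ∧ s(u, y) ∈ c.edges := by
  have hlen := hc.three_le_length
  cases c with
  | nil => simp at hlen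
  | cons h q =>
    rename_i w
    have hq : q.IsPath := ((Walk.cons_isCycle_iff q h).mp hc).1
    have hql : 2 ≤ q.length := by simp at hlen; omega
    have hqnil : ¬ q.Nil := by rw [Walk.nil_iff_length_eq]; omega
    have hadjy : G.Adj (q.getVert (q.length - 1)) u := by
      have := q.adj_getVert_succ (i := q.length - 1) (by omega)
      rwa [Nat.sub_add_cancel (by omega), q.getVert_length] at this
    have hymem : q.getVert (q.length - 1) ∈ q.support := by
      rw [Walk.mem_support_iff_exists_getVert]
      exact ⟨q.length - 1, rfl, by omega⟩
    have hedgey : s(u, q.getVert (q.length - 1)) ∈ q.edges := by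
      have h1 : ¬ q.reverse.Nil := by
        rw [Walk.nil_iff_length_eq, Walk.length_reverse]; omega
      have := aux_first_edge_mem q.reverse h1
      rw [Walk.getVert_reverse, Walk.edges_reverse, List.mem_reverse] at this
      exact this
    have hney : w ≠ q.getVert (q.length - 1) := by
      have hnodup := hq.support_nodup
      rw [← Walk.cons_support_tail hqnil, List.nodup_cons] at hnodup
      intro hcon
      have hmem2 : q.getVert (q.length - 1) ∈ q.tail.support := by
        rw [Walk.mem_support_iff_exists_getVert]
        refine ⟨q.length - 2, ?_, ?_⟩
        · rw [Walk.getVert_tail]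
          congr 1; omega
        · have := Walk.length_tail_add_one hqnil
          omega
      rw [← hcon] at hmem2
      exact hnodup.1 hmem2
    refine ⟨w, q.getVert (q.length - 1), hney, ?_, ?_, h, hadjy.symm, ?_, ?_⟩
    · simp
    · simp [hymem]
    · simp
    · simp only [Walk.edges_cons, List.mem_cons]
      right; exact hedgey

lemma aux_mem_support_rotate_iff [DecidableEq V] {v u : V} {c : G.Walk v v} (hc : c.IsCycle)
    (h : u ∈ c.support) {x : V} : x ∈ (c.rotate u h).support ↔ x ∈ c.support := by
  have h1 : ¬ c.Nil := hc.not_nil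
  have h2 : ¬ (c.rotate u h).Nil := (hc.rotate h).not_nil
  have hr := (Walk.support_rotate c u h).mem_iff (a := x)
  constructor
  · intro hx
    exact List.mem_of_mem_tail (hr.mp (aux_mem_tail_support_of_mem h2 hx))
  · intro hx
    exact List.mem_of_mem_tail (hr.mpr (aux_mem_tail_support_of_mem h1 hx))

lemma aux_three_left {a b : ℕ} {u : Fin a ⊕ Fin b}
    {c : (completeBipartiteGraph (Fin a) (Fin b)).Walk u u}
    (hc : c.IsCycle) (hch : HasChord _ c) :
    ∃ x1 x2 x3 : Fin a, x1 ≠ x2 ∧ x1 ≠ x3 ∧ x2 ≠ x3 ∧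
      Sum.inl x1 ∈ c.support ∧ Sum.inl x2 ∈ c.support ∧ Sum.inl x3 ∈ c.support := by
  obtain ⟨p, q, hp, hq, hadj, hne⟩ := hch
  obtain ⟨l, r, hlmem, hrmem, hchne⟩ :
      ∃ (l : Fin a) (r : Fin b), Sum.inl l ∈ c.support ∧ Sum.inr r ∈ c.support ∧
        s(Sum.inl l, Sum.inr r) ∉ c.edges := by
    cases p with
    | inl l =>
      cases q with
      | inl l' => simp [completeBipartiteGraph] at hadj
      | inr r => exact ⟨l, r, hp, hq, hne⟩
    | inr r =>
      cases q with
      | inl l => exact ⟨l, r, hq, hp, by rwa [Sym2.eq_swap]⟩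
      | inr r' => simp [completeBipartiteGraph] at hadj
  have hc'cyc := hc.rotate hrmem
  obtain ⟨x, y, hxy, hxmem, hymem, hax, hay, hex, hey⟩ := aux_cycle_two_nbrs hc'cyc
  obtain ⟨x1, rfl⟩ : ∃ x1, x = Sum.inl x1 := by
    cases x with
    | inl x1 => exact ⟨x1, rfl⟩
    | inr _ => simp [completeBipartiteGraph] at hax
  obtain ⟨x2, rfl⟩ : ∃ x2, y = Sum.inl x2 := by
    cases y with
    | inl x2 => exact ⟨x2, rfl⟩
    | inr _ => simp [completeBipartiteGraph] at hay
  have hedges := fun e => (Walk.rotate_edges c _ hrmem).mem_iff (a := e)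
  have hx1 : x1 ≠ l := by
    rintro rfl
    exact hchne (by rw [Sym2.eq_swap]; exact (hedges _).mp hex)
  have hx2 : x2 ≠ l := by
    rintro rfl
    exact hchne (by rw [Sym2.eq_swap]; exact (hedges _).mp hey)
  refine ⟨x1, x2, l, by simpa using hxy, hx1, hx2, ?_, ?_, hlmem⟩
  · exact (aux_mem_support_rotate_iff hc hrmem).mp hxmem
  · exact (aux_mem_support_rotate_iff hc hrmem).mp hymem

lemma aux_ncard_nbr_inr {a b : ℕ} (y : Fin b) :
    ((completeBipartiteGraph (Fin a) (Fin b)).neighborSet (Sum.inr y)).ncard = a := by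
  have h : (completeBipartiteGraph (Fin a) (Fin b)).neighborSet (Sum.inr y) =
      Set.range Sum.inl := by
    ext z; cases z <;> simp [SimpleGraph.mem_neighborSet]
  rw [h, ← Set.image_univ, Set.ncard_image_of_injective _ Sum.inl_injective, Set.ncard_univ,
    Nat.card_eq_fintype_card, Fintype.card_fin]

lemma aux_ncard_nbr_inl {a b : ℕ} (x : Fin a) :
    ((completeBipartiteGraph (Fin a) (Fin b)).neighborSet (Sum.inl x)).ncard = b := by
  have h : (completeBipartiteGraph (Fin a) (Fin b)).neighborSet (Sum.inl x) =
      Set.range Sum.inr := by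
    ext z; cases z <;> simp [SimpleGraph.mem_neighborSet]
  rw [h, ← Set.image_univ, Set.ncard_image_of_injective _ Sum.inr_injective, Set.ncard_univ,
    Nat.card_eq_fintype_card, Fintype.card_fin]

end Aux

/-- K_{3k−1,m} with m ≥ 3k−1 contains no k vertex-disjoint chorded
cycles, and σ_t(K_{3k−1,m}) = t(3k−1) when m ≥ t. -/
theorem stmt_11 (k t m : ℕ) (hk : 1 ≤ k) (ht : 1 ≤ t)
    (hm₁ : 3 * k - 1 ≤ m) (hm₂ : t ≤ m) :
    (¬ ∃ (v : Fin k → (Fin (3 * k - 1) ⊕ Fin m))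
        (c : ∀ i, (completeBipartiteGraph (Fin (3 * k - 1)) (Fin m)).Walk (v i) (v i)),
        (∀ i, (c i).IsCycle ∧ HasChord (completeBipartiteGraph (Fin (3 * k - 1)) (Fin m)) (c i)) ∧
        ∀ i j, i ≠ j → ∀ x, x ∈ (c i).support → x ∉ (c j).support) ∧
    IsLeast {s : ℕ | ∃ I : Finset (Fin (3 * k - 1) ⊕ Fin m), I.card = t ∧
        (∀ x ∈ I, ∀ y ∈ I, x ≠ y →
          ¬ (completeBipartiteGraph (Fin (3 * k - 1)) (Fin m)).Adj x y) ∧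
        s = ∑ v ∈ I, ((completeBipartiteGraph (Fin (3 * k - 1)) (Fin m)).neighborSet v).ncard}
      (t * (3 * k - 1)) := by
  classical
  constructor
  · rintro ⟨v, c, hcyc, hdisj⟩
    set S : Fin k → Finset (Fin (3 * k - 1)) :=
      fun i => @Finset.filter _
        (fun x => (Sum.inl x : Fin (3 * k - 1) ⊕ Fin m) ∈ (c i).support)
        (fun _ => Classical.dec _) Finset.univ with hS
    have hcard : ∀ i, 3 ≤ (S i).card := by
      intro i
      obtain ⟨x1, x2, x3, h12, h13, h23, m1, m2, m3⟩ := aux_three_left (hcyc i).1 (hcyc i).2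
      have hsub : ({x1, x2, x3} : Finset (Fin (3 * k - 1))) ⊆ S i := by
        intro x hx
        simp only [Finset.mem_insert, Finset.mem_singleton] at hx
        simp only [hS, Finset.mem_filter, Finset.mem_univ, true_and]
        rcases hx with rfl | rfl | rfl <;> assumption
      calc (3 : ℕ) = ({x1, x2, x3} : Finset (Fin (3 * k - 1))).card := by
            rw [Finset.card_insert_of_notMem (by simp [h12, h13]),
              Finset.card_insert_of_notMem (by simp [h23]), Finset.card_singleton]
        _ ≤ (S i).card := Finset.card_le_card hsub
    have hdis : ∀ i j, i ≠ j → Disjoint (S i) (S j) := by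
      intro i j hij
      rw [Finset.disjoint_left]
      intro x hxi hxj
      simp only [hS, Finset.mem_filter, Finset.mem_univ, true_and] at hxi hxj
      exact hdisj i j hij _ hxi hxj
    have h1 : (Finset.univ.biUnion S).card = ∑ i, (S i).card :=
      Finset.card_biUnion (fun i _ j _ h => hdis i j h)
    have h2 : (Finset.univ.biUnion S).card ≤ 3 * k - 1 := by
      simpa using Finset.card_le_univ (Finset.univ.biUnion S)
    have h3 : 3 * k ≤ ∑ i, (S i).card := by
      calc 3 * k = ∑ _i : Fin k, 3 := by simp [mul_comm]
        _ ≤ ∑ i, (S i).card := Finset.sum_le_sum (fun i _ => hcard i)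
    omega
  · constructor
    · refine ⟨(Finset.univ : Finset (Fin t)).map
        ⟨fun i => Sum.inr (Fin.castLE hm₂ i), ?_⟩, ?_, ?_, ?_⟩
      · exact Sum.inr_injective.comp (Fin.castLE_injective hm₂)
      · simp
      · intro x hx y hy hxy
        simp only [Finset.mem_map, Finset.mem_univ, Function.Embedding.coeFn_mk,
          true_and] at hx hy
        obtain ⟨i, rfl⟩ := hx
        obtain ⟨j, rfl⟩ := hy
        simp [completeBipartiteGraph]
      · rw [Finset.sum_map]
        simp only [Function.Embedding.coeFn_mk, aux_ncard_nbr_inr]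
        simp [mul_comm]
    · rintro s ⟨I, hcard, hind, rfl⟩
      by_cases hr : ∃ y : Fin m, Sum.inr y ∈ I
      · obtain ⟨y, hy⟩ := hr
        have hall : ∀ x ∈ I, ∃ z, x = Sum.inr z := by
          intro x hx
          cases x with
          | inr z => exact ⟨z, rfl⟩
          | inl l =>
            exact absurd (by simp [completeBipartiteGraph] : _)
              (not_not.mpr (hind _ hx _ hy (by simp)))
        have hval : ∀ x ∈ I,
            ((completeBipartiteGraph (Fin (3 * k - 1)) (Fin m)).neighborSet x).ncard
              = 3 * k - 1 := by
          intro x hx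
          obtain ⟨z, rfl⟩ := hall x hx
          exact aux_ncard_nbr_inr z
        rw [Finset.sum_congr rfl hval, Finset.sum_const, hcard, smul_eq_mul]
      · have hall : ∀ x ∈ I, ∃ z, x = Sum.inl z := by
          intro x hx
          cases x with
          | inl z => exact ⟨z, rfl⟩
          | inr r' => exact absurd ⟨r', hx⟩ hr
        have hval : ∀ x ∈ I,
            ((completeBipartiteGraph (Fin (3 * k - 1)) (Fin m)).neighborSet x).ncard = m := by
          intro x hx
          obtain ⟨z, rfl⟩ := hall x hx
          exact aux_ncard_nbr_inl z
        rw [Finset.sum_congr rfl hval, Finset.sum_const, hcard, smul_eq_mul]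
        exact Nat.mul_le_mul_left t hm₁
end

section
/- If G is a graph of order n with no chorded cycle, then there exists a linear ordering v₁, ..., v_n of the vertices of G such that each v_i has at most two neighbors among v₁, ..., v_{i−1}. -/
namespace StmtAux

open SimpleGraph

variable {V : Type*}

lemma getVert_mem_support' {G : SimpleGraph V} {x y : V} (p : G.Walk x y) {i : ℕ}
    (hi : i ≤ p.length) : p.getVert i ∈ p.support :=
  SimpleGraph.Walk.mem_support_iff_exists_getVert.2 ⟨i, rfl, hi⟩

lemma getVert_injOn' {G : SimpleGraph V} {x y : V} (p : G.Walk x y) :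
    p.IsPath → ∀ i, i ≤ p.length → ∀ j, j ≤ p.length →
      p.getVert i = p.getVert j → i = j := by
  induction p with
  | nil => intro _ i hi j hj _; simp only [SimpleGraph.Walk.length_nil] at hi hj; omega
  | cons h q ih =>
    intro hp i hi j hj hij
    rw [SimpleGraph.Walk.cons_isPath_iff] at hp
    rw [SimpleGraph.Walk.length_cons] at hi hj
    rcases Nat.eq_zero_or_pos i with hi0 | hi0 <;> rcases Nat.eq_zero_or_pos j with hj0 | hj0
    · omega
    · exfalso
      subst hi0
      rw [SimpleGraph.Walk.getVert_zero, SimpleGraph.Walk.getVert_cons q h (by omega)] at hij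
      exact hp.2 (hij ▸ getVert_mem_support' q (by omega))
    · exfalso
      subst hj0
      rw [SimpleGraph.Walk.getVert_zero, SimpleGraph.Walk.getVert_cons q h (by omega)] at hij
      exact hp.2 (hij.symm ▸ getVert_mem_support' q (by omega))
    · rw [SimpleGraph.Walk.getVert_cons q h (by omega),
        SimpleGraph.Walk.getVert_cons q h (by omega)] at hij
      have := ih hp.1 (i - 1) (by omega) (j - 1) (by omega) hij
      omega

variable [DecidableEq V]

lemma getVert_length_takeUntil {G : SimpleGraph V} {x y u : V} (p : G.Walk x y)
    (hu : u ∈ p.support) : p.getVert ((p.takeUntil u hu).length) = u := by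
  have hs := SimpleGraph.Walk.take_spec p hu
  have h2 := congrArg (fun w : G.Walk x y => w.getVert ((p.takeUntil u hu).length)) hs
  rw [← h2, SimpleGraph.Walk.getVert_append]
  simp

lemma getVert_takeUntil {G : SimpleGraph V} {x y u : V} (p : G.Walk x y)
    (hu : u ∈ p.support) {i : ℕ} (hi : i ≤ (p.takeUntil u hu).length) :
    (p.takeUntil u hu).getVert i = p.getVert i := by
  rcases lt_or_eq_of_le hi with hlt | heq
  · have hs := SimpleGraph.Walk.take_spec p hu
    have h2 := congrArg (fun w : G.Walk x y => w.getVert i) hs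
    rw [← h2, SimpleGraph.Walk.getVert_append, if_pos hlt]
  · rw [heq, SimpleGraph.Walk.getVert_length, getVert_length_takeUntil]

lemma eq_snd_of_mem_edges {G : SimpleGraph V} {x y u : V} (p : G.Walk x y) (hp : p.IsPath)
    (h : s(x, u) ∈ p.edges) : u = p.getVert 1 := by
  cases p with
  | nil => simp at h
  | cons hadj q =>
    rw [SimpleGraph.Walk.edges_cons, List.mem_cons] at h
    rw [SimpleGraph.Walk.cons_isPath_iff] at hp
    rcases h with h | h
    · rw [Sym2.eq_iff] at h
      rcases h with ⟨-, h2⟩ | ⟨h1, -⟩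
      · subst h2
        have : (SimpleGraph.Walk.cons hadj q).getVert 1 = q.getVert 0 :=
          SimpleGraph.Walk.getVert_cons_succ q hadj
        rw [this, SimpleGraph.Walk.getVert_zero]
      · exact absurd (h1 ▸ q.start_mem_support) hp.2
    · exact absurd (SimpleGraph.Walk.fst_mem_support_of_mem_edges q h) hp.2

/-- Core lemma: a nonempty graph with no chorded cycle has a vertex of degree ≤ 2. -/
lemma exists_small_degree [Fintype V] (G : SimpleGraph V) [DecidableRel G.Adj]
    (hnc : NoChordedCycle G) (hne : Nonempty V) :
    ∃ v : V, (Finset.univ.filter (G.Adj v)).card ≤ 2 := by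
  by_contra hcon
  push_neg at hcon
  obtain ⟨v0⟩ := hne
  set S : Set ℕ := {n | ∃ (a b : V) (p : G.Walk a b), p.IsPath ∧ p.length = n} with hS
  have hSne : S.Nonempty := ⟨0, v0, v0, SimpleGraph.Walk.nil, SimpleGraph.Walk.IsPath.nil, rfl⟩
  have hSbdd : BddAbove S := ⟨Fintype.card V, by
    rintro n ⟨a, b, p, hp, rfl⟩
    exact hp.length_lt.le⟩
  obtain ⟨a, b, p, hp, hlen⟩ := Nat.sSup_mem hSne hSbdd
  have hmax : ∀ (c d : V) (q : G.Walk c d), q.IsPath → q.length ≤ p.length := by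
    intro c d q hq
    rw [hlen]
    exact le_csSup hSbdd ⟨c, d, q, hq, rfl⟩
  have hNsup : ∀ u, G.Adj a u → u ∈ p.support := by
    intro u hu
    by_contra hus
    have hcp : (SimpleGraph.Walk.cons hu.symm p).IsPath := by
      rw [SimpleGraph.Walk.cons_isPath_iff]; exact ⟨hp, hus⟩
    have := hmax _ _ _ hcp
    rw [SimpleGraph.Walk.length_cons] at this
    omega
  set N := Finset.univ.filter (G.Adj a) with hN
  have hNadj : ∀ u ∈ N, G.Adj a u := by
    intro u hu; rw [hN, Finset.mem_filter] at hu; exact hu.2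
  have hNcard : 3 ≤ N.card := hcon a
  set g : V → ℕ := fun u => if hu : u ∈ p.support then (p.takeUntil u hu).length else 0 with hg
  have hgv : ∀ u ∈ N, p.getVert (g u) = u := by
    intro u hu
    have hsup := hNsup u (hNadj u hu)
    simp only [hg, dif_pos hsup]
    exact getVert_length_takeUntil p hsup
  have hNne : N.Nonempty := Finset.card_pos.1 (by omega)
  obtain ⟨w, hwN, hwmax⟩ := Finset.exists_max_image N g hNne
  have hginj : ∀ u ∈ N, ∀ v ∈ N, g u = g v → u = v := by
    intro u hu v hv h
    rw [← hgv u hu, ← hgv v hv, h]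
  have hgpos : ∀ u ∈ N, 1 ≤ g u := by
    intro u hu
    rcases Nat.eq_zero_or_pos (g u) with h0 | h; swap
    · exact h
    exfalso
    have h1 := hgv u hu
    rw [h0, SimpleGraph.Walk.getVert_zero] at h1
    exact (hNadj u hu).ne' h1.symm
  have hgle : ∀ u ∈ N, g u ≤ p.length := by
    intro u hu
    have hsup := hNsup u (hNadj u hu)
    simp only [hg, dif_pos hsup]
    exact SimpleGraph.Walk.length_takeUntil_le p hsup
  have hw3 : 3 ≤ g w := by
    have himg : (N.image g).card = N.card :=
      Finset.card_image_of_injOn (fun u hu v hv h => hginj u hu v hv h)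
    have hsub : N.image g ⊆ Finset.Icc 1 (g w) := by
      intro n hn
      rw [Finset.mem_image] at hn
      obtain ⟨u, hu, rfl⟩ := hn
      exact Finset.mem_Icc.2 ⟨hgpos u hu, hwmax u hu⟩
    have := Finset.card_le_card hsub
    rw [himg, Nat.card_Icc] at this
    omega
  have hwsup : w ∈ p.support := hNsup w (hNadj w hwN)
  set q := p.takeUntil w hwsup with hq
  have hqpath : q.IsPath := hp.takeUntil hwsup
  have hqlen : q.length = g w := by simp only [hg, dif_pos hwsup, hq]
  have hqlen' : (p.takeUntil w hwsup).length = g w := by rw [← hq]; exact hqlen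
  have hadjaw : G.Adj a w := hNadj w hwN
  have hsnd1 : q.getVert 1 = p.getVert 1 := getVert_takeUntil p hwsup (by rw [hqlen']; omega)
  have hwne1 : s(w, a) ∉ q.edges := by
    intro hmem
    rw [Sym2.eq_swap] at hmem
    have h1 : w = q.getVert 1 := eq_snd_of_mem_edges q hqpath hmem
    rw [hsnd1] at h1
    have h2 := hgv w hwN
    have := getVert_injOn' p hp (g w) (hgle w hwN) 1 (by have := hgle w hwN; omega)
      (by rw [h2, h1])
    omega
  set c := SimpleGraph.Walk.cons hadjaw.symm q with hc
  have hcyc : c.IsCycle := (SimpleGraph.Walk.cons_isCycle_iff q hadjaw.symm).2 ⟨hqpath, hwne1⟩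
  have hv1N : p.getVert 1 ∈ N := by
    rw [hN, Finset.mem_filter]
    refine ⟨Finset.mem_univ _, ?_⟩
    have h0 : 0 < p.length := by have := hgle w hwN; omega
    have := p.adj_getVert_succ h0
    rwa [SimpleGraph.Walk.getVert_zero] at this
  obtain ⟨u, huN, hune_w, hune_1⟩ : ∃ u ∈ N, u ≠ w ∧ u ≠ p.getVert 1 := by
    by_contra hcc
    push_neg at hcc
    have hsub : N ⊆ {w, p.getVert 1} := by
      intro u hu
      rcases eq_or_ne u w with h | h
      · exact Finset.mem_insert.2 (Or.inl h)
      · exact Finset.mem_insert.2 (Or.inr (Finset.mem_singleton.2 (hcc u hu h)))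
    have h1 := Finset.card_le_card hsub
    have h2 : ({w, p.getVert 1} : Finset V).card ≤ 2 := by
      refine le_trans (Finset.card_insert_le _ _) ?_
      simp
    omega
  have hgu_lt : g u < g w := by
    rcases lt_or_eq_of_le (hwmax u huN) with h | h
    · exact h
    · exact absurd (hginj u huN w hwN h) hune_w
  have husup : u ∈ q.support := by
    rw [SimpleGraph.Walk.mem_support_iff_exists_getVert]
    refine ⟨g u, ?_, by rw [← hq] at hqlen'; omega⟩
    rw [getVert_takeUntil p hwsup (by rw [hqlen']; omega)]
    exact hgv u huN
  have hchord : HasChord G c := by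
    refine ⟨a, u, ?_, ?_, hNadj u huN, ?_⟩
    · rw [hc, SimpleGraph.Walk.support_cons]
      exact List.mem_cons_of_mem _ q.start_mem_support
    · rw [hc, SimpleGraph.Walk.support_cons]
      exact List.mem_cons_of_mem _ husup
    · rw [hc, SimpleGraph.Walk.edges_cons]
      intro hmem
      rcases List.mem_cons.1 hmem with h | h
      · rw [Sym2.eq_iff] at h
        rcases h with ⟨h1, -⟩ | ⟨-, h2⟩
        · exact hadjaw.ne h1
        · exact hune_w h2
      · have := eq_snd_of_mem_edges q hqpath h
        rw [hsnd1] at this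
        exact hune_1 this
  exact hnc w c hcyc hchord

/-- No chorded cycle passes to induced subgraphs. -/
lemma noChordedCycle_induce (G : SimpleGraph V) (hnc : NoChordedCycle G) (s : Set V) :
    NoChordedCycle (G.induce s) := by
  intro u c hcyc hchord
  let f : G.induce s →g G := ⟨Subtype.val, fun {a b} h => h⟩
  have hinj : Function.Injective f := Subtype.val_injective
  have hcyc' : (c.map f).IsCycle := hcyc.map hinj
  obtain ⟨x, y, hxs, hys, hxy, hxe⟩ := hchord
  apply hnc _ (c.map f) hcyc'
  refine ⟨x, y, ?_, ?_, hxy, ?_⟩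
  · rw [SimpleGraph.Walk.support_map]
    exact List.mem_map_of_mem hxs
  · rw [SimpleGraph.Walk.support_map]
    exact List.mem_map_of_mem hys
  · rw [SimpleGraph.Walk.edges_map]
    intro hmem
    obtain ⟨e, he, heq⟩ := List.mem_map.1 hmem
    apply hxe
    have : e = s(x, y) := by
      apply Sym2.map.injective hinj
      rw [heq]
      rfl
    rwa [← this]

/-- Build the ordering as a list, by strong induction peeling off a small-degree vertex. -/
lemma exists_list [Fintype V] (G : SimpleGraph V) [DecidableRel G.Adj]
    (hnc : NoChordedCycle G) (s : Finset V) :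
    ∃ l : List V, l.Nodup ∧ l.toFinset = s ∧
      ∀ (i : ℕ) (h : i < l.length),
        (((l.take i).toFinset).filter (G.Adj (l.get ⟨i, h⟩))).card ≤ 2 := by
  induction s using Finset.strongInduction with
  | _ s ih =>
    rcases s.eq_empty_or_nonempty with rfl | hsne
    · exact ⟨[], by simp, by simp, by intro i h; simp at h⟩
    have hne : Nonempty (↑s : Set V) := by
      obtain ⟨x, hx⟩ := hsne
      exact ⟨⟨x, hx⟩⟩
    haveI : DecidableRel (G.induce (↑s : Set V)).Adj :=
      fun a b => inferInstanceAs (Decidable (G.Adj ↑a ↑b))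
    obtain ⟨v, hv⟩ := exists_small_degree (G.induce (↑s : Set V))
      (noChordedCycle_induce G hnc ↑s) hne
    have hvmem : (v : V) ∈ s := v.2
    have hcard : (s.filter (fun x => G.Adj (↑v) x)).card ≤ 2 := by
      have hbij : (s.filter (fun x => G.Adj (↑v) x)).card
          = (Finset.univ.filter ((G.induce (↑s : Set V)).Adj v)).card := by
        apply Finset.card_bij (fun x hx => (⟨x, (Finset.mem_filter.1 hx).1⟩ : (↑s : Set V)))
        · intro x hx
          rw [Finset.mem_filter]
          exact ⟨Finset.mem_univ _, (Finset.mem_filter.1 hx).2⟩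
        · intro x hx y hy hxy
          exact congrArg Subtype.val hxy
        · intro y hy
          refine ⟨(y : V), Finset.mem_filter.2 ⟨y.2, (Finset.mem_filter.1 hy).2⟩, rfl⟩
      omega
    obtain ⟨l, hnd, hts, hprop⟩ := ih (s.erase ↑v) (Finset.erase_ssubset hvmem)
    have hvnotl : (v : V) ∉ l := by
      intro hmem
      have : (v : V) ∈ s.erase ↑v := hts ▸ List.mem_toFinset.2 hmem
      exact (Finset.notMem_erase _ _) this
    refine ⟨l ++ [(v : V)], ?_, ?_, ?_⟩
    · rw [List.nodup_append]
      exact ⟨hnd, List.nodup_singleton _, by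
        intro x hx y hy hxy
        rw [List.mem_singleton] at hy
        subst hy; subst hxy; exact hvnotl hx⟩
    · rw [List.toFinset_append, hts]
      simp only [List.toFinset_cons, List.toFinset_nil, LawfulSingleton.insert_empty_eq]
      rw [Finset.union_comm, ← Finset.insert_eq, Finset.insert_erase hvmem]
    · intro i h
      rw [List.length_append, List.length_singleton] at h
      rcases Nat.lt_or_ge i l.length with hi | hi
      · have hget : (l ++ [(v : V)]).get ⟨i, by rw [List.length_append]; omega⟩
            = l.get ⟨i, hi⟩ := by
          simp only [List.get_eq_getElem, List.getElem_append_left hi]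
        have htake : (l ++ [(v : V)]).take i = l.take i := by
          rw [List.take_append_of_le_length (by omega)]
        rw [hget, htake]
        exact hprop i hi
      · have hieq : i = l.length := by omega
        subst hieq
        have hget : (l ++ [(v : V)]).get ⟨l.length, by simp⟩ = (v : V) := by
          simp
        have htake : (l ++ [(v : V)]).take l.length = l := by
          simpa using List.take_left l [(v : V)]
        rw [hget, htake]
        calc (l.toFinset.filter (G.Adj ↑v)).card
            ≤ (s.filter (fun x => G.Adj (↑v) x)).card := by
              apply Finset.card_le_card
              apply Finset.filter_subset_filter
              rw [hts]
              exact Finset.erase_subset _ _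
          _ ≤ 2 := hcard

end StmtAux

/-- A graph with no chorded cycle has a vertex ordering in which every
vertex has at most two neighbors preceding it. -/
theorem stmt_13 {V : Type*} [Fintype V] (G : SimpleGraph V) (hnc : NoChordedCycle G) :
    ∃ σ : Fin (Fintype.card V) ≃ V,
      ∀ i, {j : Fin (Fintype.card V) | j < i ∧ G.Adj (σ i) (σ j)}.ncard ≤ 2 := by
  classical
  obtain ⟨l, hnd, hts, hprop⟩ := StmtAux.exists_list G hnc Finset.univ
  have hlen : l.length = Fintype.card V := by
    rw [← List.toFinset_card_of_nodup hnd, hts, Finset.card_univ]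
  let f : Fin (Fintype.card V) → V := fun i => l.get (Fin.cast hlen.symm i)
  have hfinj : Function.Injective f := by
    intro i j hij
    have hg : Function.Injective l.get := List.nodup_iff_injective_get.1 hnd
    have := hg hij
    exact Fin.cast_injective _ this
  have hfbij : Function.Bijective f :=
    (Fintype.bijective_iff_injective_and_card f).2 ⟨hfinj, by simp⟩
  refine ⟨Equiv.ofBijective f hfbij, ?_⟩
  intro i
  simp only [Equiv.ofBijective_apply]
  have hset : {j : Fin (Fintype.card V) | j < i ∧ G.Adj (f i) (f j)}
      = ↑(Finset.univ.filter (fun j : Fin (Fintype.card V) => j < i ∧ G.Adj (f i) (f j))) := by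
    ext j; simp
  have hi' : (i : ℕ) < l.length := by omega
  have hcardeq : (Finset.univ.filter
        (fun j : Fin (Fintype.card V) => j < i ∧ G.Adj (f i) (f j))).card
      = (((l.take i).toFinset).filter (G.Adj (l.get ⟨i, hi'⟩))).card := by
    apply Finset.card_bij (fun j _ => f j)
    · intro j hj
      rw [Finset.mem_filter] at hj ⊢
      obtain ⟨-, hlt, hadj⟩ := hj
      have hj' : (j : ℕ) < l.length := by omega
      constructor
      · rw [List.mem_toFinset]
        have : f j = (l.take i).get ⟨j, by
            rw [List.length_take]
            exact lt_min hlt hj'⟩ := by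
          simp only [f, List.get_eq_getElem, List.getElem_take]
          rfl
        rw [this]
        exact List.get_mem _ _
      · have : f i = l.get ⟨i, hi'⟩ := rfl
        rwa [← this]
    · intro j hj k hk hjk
      exact hfinj hjk
    · intro x hx
      rw [Finset.mem_filter, List.mem_toFinset] at hx
      obtain ⟨hxmem, hadj⟩ := hx
      obtain ⟨⟨k, hk⟩, hkx⟩ := List.get_of_mem hxmem
      rw [List.length_take] at hk
      have hki : k < (i : ℕ) := lt_of_lt_of_le hk (min_le_left _ _)
      have hkl : k < l.length := by omega
      refine ⟨⟨k, by omega⟩, ?_, ?_⟩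
      · rw [Finset.mem_filter]
        refine ⟨Finset.mem_univ _, ?_, ?_⟩
        · exact hki
        · have hfk : f ⟨k, by omega⟩ = x := by
            rw [← hkx]
            simp only [f, List.get_eq_getElem, List.getElem_take]
            rfl
          have hfi : f i = l.get ⟨i, hi'⟩ := rfl
          rw [hfk, hfi]
          exact hadj
      · rw [← hkx]
        simp only [f, List.get_eq_getElem, List.getElem_take]
        rfl
  rw [hset, Set.ncard_coe_finset, hcardeq]
  exact hprop i hi'
end

section
/- Every graph with no chorded cycle is 3-colorable (tripartite). -/
open SimpleGraph

section Helpers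

variable {V : Type*} {G : SimpleGraph V}

lemma getVert_injOn' {u v : V} {p : G.Walk u v} (hp : p.IsPath) :
    ∀ i, i ≤ p.length → ∀ j, j ≤ p.length → p.getVert i = p.getVert j → i = j := by
  induction p with
  | nil => intro i hi j hj _; simp only [Walk.length_nil, Nat.le_zero] at hi hj; omega
  | cons h q ih =>
    rw [Walk.cons_isPath_iff] at hp
    intro i hi j hj hij
    match i, j with
    | 0, 0 => rfl
    | 0, j+1 =>
      exfalso
      simp only [Walk.getVert_zero, Walk.getVert_cons_succ] at hij
      exact hp.2 (Walk.mem_support_iff_exists_getVert.mpr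
        ⟨j, hij.symm, by simpa using hj⟩)
    | i+1, 0 =>
      exfalso
      simp only [Walk.getVert_zero, Walk.getVert_cons_succ] at hij
      exact hp.2 (Walk.mem_support_iff_exists_getVert.mpr
        ⟨i, hij, by simpa using hi⟩)
    | i+1, j+1 =>
      simp only [Walk.getVert_cons_succ] at hij
      have := ih hp.1 i (by simpa using hi) j (by simpa using hj) hij
      omega

lemma getVert_takeUntil [DecidableEq V] {u v w : V} {p : G.Walk u v} (h : w ∈ p.support)
    {j : ℕ} (hj : j ≤ (p.takeUntil w h).length) :
    (p.takeUntil w h).getVert j = p.getVert j := by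
  conv_rhs => rw [← Walk.take_spec p h]
  rw [Walk.getVert_append]
  rcases lt_or_eq_of_le hj with h' | h'
  · rw [if_pos h']
  · subst h'
    rw [if_neg (lt_irrefl _), Nat.sub_self, Walk.getVert_zero, Walk.getVert_length]

lemma getVert_length_takeUntil [DecidableEq V] {u v w : V} {p : G.Walk u v}
    (h : w ∈ p.support) : p.getVert ((p.takeUntil w h).length) = w := by
  rw [← getVert_takeUntil h le_rfl, Walk.getVert_length]

lemma mem_support_takeUntil_of_length_le [DecidableEq V] {u v w w' : V} {p : G.Walk u v}
    (h : w ∈ p.support) (h' : w' ∈ p.support)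
    (hle : (p.takeUntil w' h').length ≤ (p.takeUntil w h).length) :
    w' ∈ (p.takeUntil w h).support := by
  rw [Walk.mem_support_iff_exists_getVert]
  exact ⟨(p.takeUntil w' h').length,
    by rw [getVert_takeUntil h hle, getVert_length_takeUntil], hle⟩

lemma eq_getVert_one_of_mem_edges {u v x : V} {p : G.Walk u v} (hp : p.IsPath)
    (hx : s(u, x) ∈ p.edges) : x = p.getVert 1 := by
  cases p with
  | nil => simp at hx
  | cons h q =>
    rw [Walk.cons_isPath_iff] at hp
    rw [Walk.edges_cons, List.mem_cons] at hx
    rcases hx with hx | hx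
    · rw [Sym2.eq_iff] at hx
      rcases hx with ⟨-, rfl⟩ | ⟨h1, h2⟩
      · simp [Walk.getVert_cons_succ]
      · exact absurd h1 h.ne
    · exact absurd (Walk.fst_mem_support_of_mem_edges q hx) hp.2

lemma noChordedCycle_comap {V W : Type*} {G : SimpleGraph V} {H : SimpleGraph W}
    (f : H →g G) (hf : Function.Injective f) (hnc : NoChordedCycle G) : NoChordedCycle H := by
  rintro u c hc ⟨a, b, ha, hb, hab, hne⟩
  refine hnc (f u) (c.map f) (hc.map hf) ⟨f a, f b, ?_, ?_, f.map_adj hab, ?_⟩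
  · rw [Walk.support_map]; exact List.mem_map_of_mem (f := ⇑f) ha
  · rw [Walk.support_map]; exact List.mem_map_of_mem (f := ⇑f) hb
  · rw [Walk.edges_map]
    intro hmem
    obtain ⟨e, he, heq⟩ := List.mem_map.mp hmem
    rw [← Sym2.map_pair_eq] at heq
    exact hne ((Sym2.map.injective hf heq) ▸ he)

end Helpers

lemma exists_degree_le_two {W : Type*} [Fintype W] [DecidableEq W] (H : SimpleGraph W)
    [DecidableRel H.Adj] (hnc : NoChordedCycle H) (x0 : W) : ∃ v, H.degree v ≤ 2 := by
  by_contra hdeg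
  push_neg at hdeg
  classical
  set S : ℕ → Prop := fun n => ∃ (u : W) (v : W) (p : H.Walk u v), p.IsPath ∧ p.length = n
    with hSdef
  have h0 : S 0 := ⟨x0, x0, Walk.nil, by simp⟩
  have hbdd : ∀ n, S n → n ≤ Fintype.card W := by
    rintro n ⟨u, v, p, hp, rfl⟩; exact hp.length_lt.le
  obtain ⟨u, v, p, hp, hlen⟩ : S (Nat.findGreatest S (Fintype.card W)) :=
    Nat.findGreatest_spec (Nat.zero_le _) h0
  have hmax : ∀ n, S n → n ≤ p.length := by
    intro n hn; rw [hlen]; exact Nat.le_findGreatest (hbdd n hn) hn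
  have nb : ∀ w, H.Adj u w → w ∈ p.support := by
    intro w hw
    by_contra hws
    have hS : S (p.length + 1) :=
      ⟨w, v, Walk.cons hw.symm p, (Walk.cons_isPath_iff _ _).mpr ⟨hp, hws⟩, by simp⟩
    have := hmax _ hS
    omega
  let fI : W → ℕ := fun w => if h : w ∈ p.support then (p.takeUntil w h).length else 0
  have hfIeq : ∀ (w) (h : w ∈ p.support), (p.takeUntil w h).length = fI w := by
    intro w h; simp only [fI, dif_pos h]
  have hgv : ∀ (w) (_ : w ∈ p.support), p.getVert (fI w) = w := by
    intro w h; rw [← hfIeq w h]; exact getVert_length_takeUntil h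
  have hfIle : ∀ (w) (_ : w ∈ p.support), fI w ≤ p.length := by
    intro w h; rw [← hfIeq w h]; exact Walk.length_takeUntil_le p h
  have hfIinj : ∀ w ∈ p.support, ∀ w' ∈ p.support, fI w = fI w' → w = w' := by
    intro w h w' h' heq
    rw [← hgv w h, ← hgv w' h', heq]
  set T : Finset ℕ := (H.neighborFinset u).attach.image (fun w => fI w.1) with hTdef
  have hTcard : 3 ≤ T.card := by
    rw [hTdef, Finset.card_image_of_injOn, Finset.card_attach, card_neighborFinset_eq_degree]
    · exact hdeg u
    · intro a _ b _ hab
      exact Subtype.ext (hfIinj _ (nb _ ((H.mem_neighborFinset u a.1).mp a.2)) _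
        (nb _ ((H.mem_neighborFinset u b.1).mp b.2)) hab)
  have hmemT : ∀ n ∈ T, ∃ w, H.Adj u w ∧ fI w = n := by
    intro n hn
    obtain ⟨w, -, hw⟩ := Finset.mem_image.mp hn
    exact ⟨w.1, (H.mem_neighborFinset u w.1).mp w.2, hw⟩
  have hpos : ∀ n ∈ T, 1 ≤ n := by
    intro n hn
    obtain ⟨w, hadj, rfl⟩ := hmemT n hn
    by_contra h1
    have hz : fI w = 0 := by omega
    have hu : p.getVert 0 = w := by rw [← hz]; exact hgv w (nb _ hadj)
    rw [Walk.getVert_zero] at hu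
    exact H.ne_of_adj hadj hu
  have hTne : T.Nonempty := Finset.card_pos.mp (by omega)
  obtain ⟨i3, hi3T, hi3max⟩ : ∃ i3 ∈ T, ∀ n ∈ T, n ≤ i3 :=
    ⟨T.max' hTne, T.max'_mem hTne, fun n hn => T.le_max' n hn⟩
  have hTne2 : (T.erase i3).Nonempty := by
    rw [← Finset.card_pos, Finset.card_erase_of_mem hi3T]; omega
  obtain ⟨i2, hi2T', hi2max⟩ : ∃ i2 ∈ T.erase i3, ∀ n ∈ T.erase i3, n ≤ i2 :=
    ⟨(T.erase i3).max' hTne2, Finset.max'_mem _ _, fun n hn => Finset.le_max' _ n hn⟩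
  have hi2T : i2 ∈ T := Finset.mem_of_mem_erase hi2T'
  have hi23 : i2 < i3 := lt_of_le_of_ne (hi3max i2 hi2T) (Finset.ne_of_mem_erase hi2T')
  have hT3ne : ((T.erase i3).erase i2).Nonempty := by
    rw [← Finset.card_pos, Finset.card_erase_of_mem hi2T', Finset.card_erase_of_mem hi3T]; omega
  obtain ⟨i1, hi1⟩ := hT3ne
  have hi1T2 : i1 ∈ T.erase i3 := Finset.mem_of_mem_erase hi1
  have hi12 : i1 < i2 := lt_of_le_of_ne (hi2max i1 hi1T2) (Finset.ne_of_mem_erase hi1)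
  have h1pos : 1 ≤ i1 := hpos i1 (Finset.mem_of_mem_erase hi1T2)
  have hi2ge : 2 ≤ i2 := by omega
  have hi3ge : 3 ≤ i3 := by omega
  obtain ⟨w3, hw3adj, hw3len⟩ := hmemT i3 hi3T
  obtain ⟨w2, hw2adj, hw2len⟩ := hmemT i2 hi2T
  have hw3sup : w3 ∈ p.support := nb _ hw3adj
  have hw2sup : w2 ∈ p.support := nb _ hw2adj
  have hQlen : (p.takeUntil w3 hw3sup).length = i3 := by rw [hfIeq w3 hw3sup, hw3len]
  have hQpath : (p.takeUntil w3 hw3sup).IsPath := hp.takeUntil hw3sup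
  have hi3le : i3 ≤ p.length := by rw [← hw3len]; exact hfIle w3 hw3sup
  have hi2le : i2 ≤ p.length := by rw [← hw2len]; exact hfIle w2 hw2sup
  have hfirst : ∀ x, s(u, x) ∈ (p.takeUntil w3 hw3sup).edges → x = p.getVert 1 := by
    intro x hx
    rw [eq_getVert_one_of_mem_edges hQpath hx]
    exact getVert_takeUntil hw3sup (by omega)
  have hne3 : s(w3, u) ∉ (p.takeUntil w3 hw3sup).edges := by
    intro hmem
    rw [Sym2.eq_swap] at hmem
    have h1 : w3 = p.getVert 1 := hfirst _ hmem
    have h3 : p.getVert i3 = w3 := by rw [← hw3len]; exact hgv w3 hw3sup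
    have := getVert_injOn' hp i3 (by omega) 1 (by omega) (by rw [h3, h1])
    omega
  have hcyc : (Walk.cons hw3adj.symm (p.takeUntil w3 hw3sup)).IsCycle :=
    (Walk.cons_isCycle_iff _ hw3adj.symm).mpr ⟨hQpath, hne3⟩
  apply hnc _ _ hcyc
  refine ⟨u, w2, ?_, ?_, hw2adj, ?_⟩
  · rw [Walk.support_cons]
    exact List.mem_cons_of_mem _ (Walk.start_mem_support _)
  · rw [Walk.support_cons]
    refine List.mem_cons_of_mem _ ?_
    refine mem_support_takeUntil_of_length_le hw3sup hw2sup ?_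
    rw [hfIeq w2 hw2sup, hfIeq w3 hw3sup, hw2len, hw3len]; omega
  · rw [Walk.edges_cons, List.mem_cons]
    rintro (heq | hmem)
    · rw [Sym2.eq_iff] at heq
      rcases heq with ⟨h1, h2⟩ | ⟨-, h2⟩
      · exact H.ne_of_adj hw3adj h1
      · rw [h2] at hw2len; rw [hw2len] at hw3len; omega
    · have h1 : w2 = p.getVert 1 := hfirst _ hmem
      have h2 : p.getVert i2 = w2 := by rw [← hw2len]; exact hgv w2 hw2sup
      have := getVert_injOn' hp i2 (by omega) 1 (by omega) (by rw [h2, h1])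
      omega

universe u

lemma finite_colorable : ∀ (n : ℕ) (W : Type u) [Fintype W] (H : SimpleGraph W),
    Fintype.card W ≤ n → NoChordedCycle H → H.Colorable 3 := by
  intro n
  induction n with
  | zero =>
    intro W _ H hcard _
    have : IsEmpty W := Fintype.card_eq_zero_iff.mp (Nat.le_zero.mp hcard)
    exact SimpleGraph.Colorable.of_isEmpty (G := H) 3
  | succ n ih =>
    intro W _ H hcard hnc
    classical
    cases isEmpty_or_nonempty W with
    | inl h => exact SimpleGraph.Colorable.of_isEmpty (G := H) 3
    | inr h =>
      obtain ⟨v, hv⟩ := exists_degree_le_two H hnc h.some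
      let W' := {w : W // w ≠ v}
      let H' : SimpleGraph W' := H.comap (Function.Embedding.subtype _)
      have hcard' : Fintype.card W' ≤ n := by
        have h1 := Fintype.card_subtype_lt (p := fun w => w ≠ v) (x := v) (by simp)
        have h2 : Fintype.card W' = Fintype.card {x // (fun w => w ≠ v) x} :=
          Fintype.card_congr (Equiv.refl _)
        have h3 : Fintype.card {x // x ≠ v} = Fintype.card W' := Fintype.card_congr (Equiv.refl _)
        omega
      have hnc' : NoChordedCycle H' :=
        noChordedCycle_comap (SimpleGraph.Embedding.comap (Function.Embedding.subtype _) H).toHom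
          Subtype.val_injective hnc
      obtain ⟨C⟩ := ih W' H' hcard' hnc'
      set used : Finset (Fin 3) := (H.neighborFinset v).attach.image
        (fun w => C ⟨w.1, (H.ne_of_adj ((H.mem_neighborFinset v w.1).mp w.2)).symm⟩) with husdef
      have hused : ∃ c0 : Fin 3, c0 ∉ used := by
        by_contra hno
        push_neg at hno
        have h1 : (Finset.univ : Finset (Fin 3)).card ≤ used.card :=
          Finset.card_le_card (fun x _ => hno x)
        have h2 : used.card ≤ 2 := by
          refine le_trans Finset.card_image_le ?_
          rw [Finset.card_attach, card_neighborFinset_eq_degree]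
          exact hv
        simp only [Finset.card_univ, Fintype.card_fin] at h1
        omega
      obtain ⟨c0, hc0⟩ := hused
      refine ⟨SimpleGraph.Coloring.mk (fun w => if h : w = v then c0 else C ⟨w, h⟩) ?_⟩
      intro a b hab hcc
      by_cases ha : a = v <;> by_cases hb : b = v
      · exact H.irrefl (ha ▸ hb ▸ hab)
      · rw [dif_pos ha, dif_neg hb] at hcc
        apply hc0
        rw [hcc, husdef]
        exact Finset.mem_image.mpr
          ⟨⟨b, (H.mem_neighborFinset v b).mpr (ha ▸ hab)⟩, Finset.mem_attach _ _, rfl⟩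
      · rw [dif_pos hb, dif_neg ha] at hcc
        apply hc0
        rw [← hcc, husdef]
        exact Finset.mem_image.mpr
          ⟨⟨a, (H.mem_neighborFinset v a).mpr (hb ▸ hab.symm)⟩, Finset.mem_attach _ _, rfl⟩
      · rw [dif_neg ha, dif_neg hb] at hcc
        exact C.valid (show H'.Adj ⟨a, ha⟩ ⟨b, hb⟩ from hab) hcc

/-- Every graph with no chorded cycle is 3-colorable. -/
theorem stmt_14 {V : Type*} (G : SimpleGraph V) (hnc : NoChordedCycle G) :
    G.Colorable 3 := by
  have h := SimpleGraph.nonempty_hom_of_forall_finite_subgraph_hom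
    (G := G) (F := (⊤ : SimpleGraph (Fin 3))) ?_
  · exact h
  · intro G' hfin
    haveI : Fintype G'.verts := hfin.fintype
    have hnc' : NoChordedCycle G'.coe :=
      noChordedCycle_comap G'.hom Subtype.val_injective hnc
    exact (finite_colorable (Fintype.card G'.verts) G'.verts G'.coe le_rfl hnc').some
end

section
/- If every vertex of a graph G of order n ≥ 4 has degree at least 3, then G contains a chorded cycle. -/
/-- In a path starting at `u`, the only edge incident to `u` is the first one. -/
private lemma snd_of_mem_edges' {V : Type*} {G : SimpleGraph V} {u c w : V}
    {q : G.Walk u c} (hq : q.IsPath) (h : s(u, w) ∈ q.edges) : w = q.getVert 1 := by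
  cases q with
  | nil => simp at h
  | cons hadj q' =>
    rw [SimpleGraph.Walk.edges_cons] at h
    rcases List.mem_cons.mp h with h1 | h2
    · rw [show (SimpleGraph.Walk.cons hadj q').getVert 1 = q'.getVert 0 from
        SimpleGraph.Walk.getVert_cons_succ (n := 0) q' hadj, SimpleGraph.Walk.getVert_zero]
      rcases Sym2.eq_iff.mp h1 with ⟨-, hw⟩ | ⟨hu, -⟩
      · exact hw
      · exact absurd hu hadj.ne
    · exact absurd (SimpleGraph.Walk.fst_mem_support_of_mem_edges q' h2)
        ((SimpleGraph.Walk.cons_isPath_iff _ _).mp hq).2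

/-- A path from `u` to `c` whose second vertex is `c` has support `[u, c]`. -/
private lemma support_eq_pair {V : Type*} {G : SimpleGraph V} {u c : V}
    (q : G.Walk u c) (hq : q.IsPath) (hne : u ≠ c) (h : q.getVert 1 = c) :
    q.support = [u, c] := by
  cases q with
  | nil => exact absurd rfl hne
  | cons hadj q' =>
    rw [show (SimpleGraph.Walk.cons hadj q').getVert 1 = q'.getVert 0 from
        SimpleGraph.Walk.getVert_cons_succ (n := 0) q' hadj, SimpleGraph.Walk.getVert_zero] at h
    subst h
    have hnil : q' = SimpleGraph.Walk.nil :=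
      (SimpleGraph.Walk.isPath_iff_eq_nil (p := q')).mp
        ((SimpleGraph.Walk.cons_isPath_iff _ _).mp hq).1
    rw [SimpleGraph.Walk.support_cons, hnil, SimpleGraph.Walk.support_nil]

/-- If every vertex of a graph of order n ≥ 4 has degree at least 3,
then the graph contains a chorded cycle. -/
theorem stmt_18 {V : Type*} [Fintype V] (G : SimpleGraph V) [DecidableRel G.Adj]
    (hn : 4 ≤ Fintype.card V) (hdeg : ∀ v : V, 3 ≤ G.degree v) :
    ∃ (u : V) (c : G.Walk u u), c.IsCycle ∧ HasChord G c := by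
  classical
  have hne : Nonempty V := Fintype.card_pos_iff.mp (by omega)
  obtain ⟨v0⟩ := hne
  set S : Set ℕ := {n | ∃ (x y : V) (p : G.Walk x y), p.IsPath ∧ p.length = n} with hS
  have hS0 : (0 : ℕ) ∈ S := ⟨v0, v0, SimpleGraph.Walk.nil, SimpleGraph.Walk.IsPath.nil, rfl⟩
  have hSbdd : BddAbove S := by
    refine ⟨Fintype.card V, fun n hn => ?_⟩
    obtain ⟨x, y, p, hp, hlen⟩ := hn
    exact hlen ▸ hp.length_lt.le
  obtain ⟨u, v, p, hp, hplen⟩ := Nat.sSup_mem ⟨0, hS0⟩ hSbdd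
  have hmax : ∀ (x y : V) (p' : G.Walk x y), p'.IsPath → p'.length ≤ p.length := by
    intro x y p' hp'
    rw [hplen]
    exact le_csSup hSbdd ⟨x, y, p', hp', rfl⟩
  -- every neighbor of u lies on p
  have hnbr : ∀ w, G.Adj u w → w ∈ p.support := by
    intro w hw
    by_contra hws
    have hP : (SimpleGraph.Walk.cons hw.symm p).IsPath :=
      (SimpleGraph.Walk.cons_isPath_iff _ _).mpr ⟨hp, hws⟩
    have := hmax _ _ _ hP
    rw [SimpleGraph.Walk.length_cons] at this
    omega
  -- three distinct neighbors of u
  obtain ⟨a, ha, b, hb, d, hd, hab, had, hbd⟩ :=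
    Finset.two_lt_card.mp (lt_of_lt_of_le (by norm_num) (hdeg u))
  rw [SimpleGraph.mem_neighborFinset] at ha hb hd
  -- c := the last neighbor of u along p
  set L := p.support with hL
  set F := L.filter (fun w => G.Adj u w) with hF
  have hFne : F ≠ [] := by
    have : a ∈ F := List.mem_filter.mpr ⟨hnbr a ha, by simpa using ha⟩
    exact List.ne_nil_of_mem this
  set c := F.getLast hFne with hc
  have hcF : c ∈ F := List.getLast_mem hFne
  have hcL : c ∈ L := (List.mem_filter.mp hcF).1
  have hadjuc : G.Adj u c := by simpa using (List.mem_filter.mp hcF).2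
  set q := p.takeUntil c hcL with hq
  have hqp : q.IsPath := hp.takeUntil hcL
  have hsplit : L = q.support ++ (p.dropUntil c hcL).support.tail := by
    conv_lhs => rw [hL, ← p.take_spec hcL]
    rw [SimpleGraph.Walk.support_append]
  -- every neighbor of u lies on q
  have hnbrq : ∀ w, G.Adj u w → w ∈ q.support := by
    intro w hw
    by_contra hwq
    have hwL : w ∈ L := hnbr w hw
    have hwtail : w ∈ (p.dropUntil c hcL).support.tail := by
      rw [hsplit] at hwL
      rcases List.mem_append.mp hwL with h | h
      · exact absurd h hwq
      · exact h
    set B := ((p.dropUntil c hcL).support.tail).filter (fun w => G.Adj u w) with hB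
    have hFsplit : F = q.support.filter (fun w => G.Adj u w) ++ B := by
      rw [hF, hsplit, List.filter_append]
    have htne : B ≠ [] :=
      List.ne_nil_of_mem (List.mem_filter.mpr ⟨hwtail, by simpa using hw⟩)
    have h1 : F.getLast? = some c := by
      rw [hc]; exact List.getLast?_eq_getLast_of_ne_nil hFne
    rw [hFsplit, List.getLast?_append_of_ne_nil _ htne] at h1
    obtain ⟨hB', hcB'⟩ := List.mem_getLast?_eq_getLast (by rw [h1]; rfl : c ∈ B.getLast?)
    have hcB : c ∈ B := hcB' ▸ List.getLast_mem hB'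
    have hctail : c ∈ (p.dropUntil c hcL).support.tail := (List.mem_filter.mp hcB).1
    have hnd : L.Nodup := hp.support_nodup
    rw [hsplit] at hnd
    exact (List.disjoint_of_nodup_append hnd) (q.end_mem_support) hctail
  -- pick a neighbor w distinct from c and from q.getVert 1
  have key : ∃ w, G.Adj u w ∧ w ∈ q.support ∧ w ≠ c ∧ w ≠ q.getVert 1 := by
    by_cases h1 : a ≠ c ∧ a ≠ q.getVert 1
    · exact ⟨a, ha, hnbrq a ha, h1.1, h1.2⟩
    by_cases h2 : b ≠ c ∧ b ≠ q.getVert 1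
    · exact ⟨b, hb, hnbrq b hb, h2.1, h2.2⟩
    by_cases h3 : d ≠ c ∧ d ≠ q.getVert 1
    · exact ⟨d, hd, hnbrq d hd, h3.1, h3.2⟩
    push_neg at h1 h2 h3
    by_cases hac : a = c
    · by_cases hbc : b = c
      · exact absurd (hac.trans hbc.symm) hab
      · by_cases hdc : d = c
        · exact absurd (hac.trans hdc.symm) had
        · exact absurd ((h2 hbc).trans (h3 hdc).symm) hbd
    · by_cases hbc : b = c
      · by_cases hdc : d = c
        · exact absurd (hbc.trans hdc.symm) hbd
        · exact absurd ((h1 hac).trans (h3 hdc).symm) had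
      · exact absurd ((h1 hac).trans (h2 hbc).symm) hab
  obtain ⟨w, hw, hwq, hwc, hw1⟩ := key
  have hwu : w ≠ u := fun h => G.loopless.irrefl u (h ▸ hw)
  -- the first edge of the cycle (from c back to u) is not an edge of q
  have hedge_cu : s(c, u) ∉ q.edges := by
    intro h
    have hcv : c = q.getVert 1 := snd_of_mem_edges' hqp (by rwa [Sym2.eq_swap])
    have hsupp := support_eq_pair q hqp hadjuc.ne hcv.symm
    rw [hsupp] at hwq
    rcases List.mem_cons.mp hwq with h' | h'
    · exact hwu h'
    · rcases List.mem_cons.mp h' with h'' | h''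
      · exact hwc h''
      · exact List.not_mem_nil h''
  refine ⟨c, SimpleGraph.Walk.cons hadjuc.symm q,
    (SimpleGraph.Walk.cons_isCycle_iff q hadjuc.symm).mpr ⟨hqp, hedge_cu⟩, ?_⟩
  refine ⟨u, w, ?_, ?_, hw, ?_⟩
  · simp only [SimpleGraph.Walk.support_cons, List.mem_cons]
    exact Or.inr q.start_mem_support
  · simp only [SimpleGraph.Walk.support_cons, List.mem_cons]
    exact Or.inr hwq
  · rw [SimpleGraph.Walk.edges_cons]
    intro h
    rcases List.mem_cons.mp h with h1 | h2
    · rcases Sym2.eq_iff.mp h1 with ⟨hu', -⟩ | ⟨-, hw'⟩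
      · exact hadjuc.ne hu'
      · exact hwc hw'
    · exact hw1 (snd_of_mem_edges' hqp h2)
end

section
/- Let H be a connected graph with no chorded cycle. Then either H is a cycle, or the set S of vertices of H having degree at most 2 induces a forest in H. -/
private lemma exists_first_edge {V : Type*} {G : SimpleGraph V} {u x : V}
    (p : G.Walk u x) (hp : ¬p.Nil) : ∃ b, s(u, b) ∈ p.edges := by
  cases p with
  | nil => simp at hp
  | cons h q => exact ⟨_, by rw [SimpleGraph.Walk.edges_cons]; exact List.mem_cons_self⟩

private lemma cycle_two_edges {V : Type*} {G : SimpleGraph V} {v : V}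
    (d : G.Walk v v) (hd : d.IsCycle) :
    ∃ a b, a ≠ b ∧ s(v, a) ∈ d.edges ∧ s(v, b) ∈ d.edges := by
  cases d with
  | nil => exact absurd hd SimpleGraph.Walk.IsCycle.not_of_nil
  | cons h q =>
    rename_i w
    rw [SimpleGraph.Walk.cons_isCycle_iff] at hd
    have hqlen : q.length ≠ 0 := by
      intro h0
      exact h.ne (SimpleGraph.Walk.eq_of_length_eq_zero h0).symm
    have hrev : ¬q.reverse.Nil := by
      rw [SimpleGraph.Walk.nil_iff_length_eq, SimpleGraph.Walk.length_reverse]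
      exact hqlen
    obtain ⟨b, hb⟩ := exists_first_edge q.reverse hrev
    rw [SimpleGraph.Walk.edges_reverse, List.mem_reverse] at hb
    have hbw : w ≠ b := by
      rintro rfl
      exact hd.2 hb
    exact ⟨w, b, hbw, by simp, by simp [hb]⟩

/-- If H is connected with no chorded cycle, then either H is a cycle,
or the set S of vertices of degree at most 2 induces a forest in H. -/
theorem stmt_19 {V : Type*} [Fintype V] (H : SimpleGraph V) [DecidableRel H.Adj]
    (hconn : H.Connected) (hnc : NoChordedCycle H) :
    (∃ (u : V) (c : H.Walk u u), c.IsCycle ∧ (∀ x : V, x ∈ c.support) ∧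
      ∀ e ∈ H.edgeSet, e ∈ c.edges) ∨
    (H.induce {v : V | H.degree v ≤ 2}).IsAcyclic := by
  set S : Set V := {v : V | H.degree v ≤ 2} with hS
  by_cases hac : (H.induce S).IsAcyclic
  · exact Or.inr hac
  left
  rw [SimpleGraph.IsAcyclic] at hac
  push_neg at hac
  obtain ⟨u0, c0, hc0⟩ := hac
  classical
  let f := SimpleGraph.Embedding.induce (G := H) S
  let c : H.Walk (f u0) (f u0) := c0.map f.toHom
  have hc : c.IsCycle := hc0.map f.injective
  -- every vertex of c has degree ≤ 2
  have hdeg : ∀ v ∈ c.support, H.degree v ≤ 2 := by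
    intro v hv
    rw [show c.support = c0.support.map f.toHom from SimpleGraph.Walk.support_map _ _,
      List.mem_map] at hv
    obtain ⟨x, _, rfl⟩ := hv
    exact x.2
  -- every edge of H incident to a vertex of c is an edge of c
  have hsat : ∀ a ∈ c.support, ∀ x : V, H.Adj a x → s(a, x) ∈ c.edges := by
    intro a ha x hax
    have hrot : (c.rotate a ha).IsCycle := hc.rotate ha
    obtain ⟨w, b, hwb, hw, hb⟩ := cycle_two_edges (c.rotate a ha) hrot
    rw [(SimpleGraph.Walk.rotate_edges c a ha).mem_iff] at hw hb
    have hadjw : H.Adj a w := c.adj_of_mem_edges hw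
    have hadjb : H.Adj a b := c.adj_of_mem_edges hb
    have hsub : ({w, b} : Finset V) ⊆ H.neighborFinset a := by
      intro y hy
      rcases Finset.mem_insert.mp hy with rfl | hy
      · exact (SimpleGraph.mem_neighborFinset _ _ _).mpr hadjw
      · rw [Finset.mem_singleton] at hy
        subst hy
        exact (SimpleGraph.mem_neighborFinset _ _ _).mpr hadjb
    have hcard : (H.neighborFinset a).card ≤ ({w, b} : Finset V).card := by
      rw [Finset.card_insert_of_notMem (by simpa using hwb), Finset.card_singleton]
      exact hdeg a ha
    have heq : ({w, b} : Finset V) = H.neighborFinset a :=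
      Finset.eq_of_subset_of_card_le hsub hcard
    have hx : x ∈ ({w, b} : Finset V) := by
      rw [heq]
      exact (SimpleGraph.mem_neighborFinset _ _ _).mpr hax
    rcases Finset.mem_insert.mp hx with rfl | hx
    · exact hw
    · rw [Finset.mem_singleton] at hx
      subst hx
      exact hb
  -- the support of c is closed under adjacency
  have hclosed : ∀ a ∈ c.support, ∀ x : V, H.Adj a x → x ∈ c.support := by
    intro a ha x hax
    exact c.snd_mem_support_of_mem_edges (hsat a ha x hax)
  -- every vertex is in the support of c
  have hall : ∀ x : V, x ∈ c.support := by
    have key : ∀ {y x : V} (p : H.Walk y x), y ∈ c.support → x ∈ c.support := by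
      intro y x p
      induction p with
      | nil => exact fun h => h
      | cons h q ih => exact fun hy => ih (hclosed _ hy _ h)
    intro x
    obtain ⟨p⟩ := hconn (f u0) x
    exact key p c.start_mem_support
  refine ⟨f u0, c, hc, hall, ?_⟩
  intro e he
  induction e with
  | h a b =>
    rw [SimpleGraph.mem_edgeSet] at he
    exact hsat a (hall a) b he
end
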